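/- arXiv:1703.00412 — 11 statements merged into one kernel-verified Lean document; each statement's English description precedes it below -/
import Mathlib

section
/- Suppose the Hessian map H is Lipschitz continuous in operator norm with constant σ > 0. Let x ∈ E with λ(x) < 0, let γ ∈ (0,1] and θ > 0, and let d ∈ E satisfy ⟪d, H(x) d⟫ ≤ γ λ(x) ‖d‖², ⟪g(x), d⟫ ≤ 0, and ‖d‖ = θ|λ(x)|. Then for every β ∈ (0, 3γ/(σθ)) one has f(x + β d) ≤ f(x) − c₁(β) |λ(x)|³, where c₁(β) := (1/2) β² θ² (γ − (1/3) σ β θ), and moreover c₁(β) > 0. -/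
open scoped RealInnerProductSpace

/-- If `u 0 = 0` and the derivative of `u` is nonpositive on `[0,1]`, then `u t ≤ 0` there. -/
lemma aux_nonpos (u u' : ℝ → ℝ) (hu : ∀ t, HasDerivAt u (u' t) t) (h0 : u 0 = 0)
    (hle : ∀ t ∈ Set.Icc (0:ℝ) 1, u' t ≤ 0) : ∀ t ∈ Set.Icc (0:ℝ) 1, u t ≤ 0 := by
  have hanti : AntitoneOn u (Set.Icc (0:ℝ) 1) := by
    apply antitoneOn_of_deriv_nonpos (convex_Icc 0 1)
    · exact fun t _ => (hu t).continuousAt.continuousWithinAt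
    · exact fun t _ => (hu t).differentiableAt.differentiableWithinAt
    · intro t ht
      rw [interior_Icc] at ht
      rw [(hu t).deriv]
      exact hle t ⟨le_of_lt ht.1, le_of_lt ht.2⟩
  intro t ht
  calc u t ≤ u 0 := hanti (Set.left_mem_Icc.2 zero_le_one) ht ht.1
  _ = 0 := h0

/-- Cubic upper bound for a function with Lipschitz Hessian, along a segment. -/
lemma cubic_bound (n : ℕ)
    (f : EuclideanSpace ℝ (Fin n) → ℝ) (hf : ContDiff ℝ 2 f)
    (H : EuclideanSpace ℝ (Fin n) → EuclideanSpace ℝ (Fin n) →L[ℝ] EuclideanSpace ℝ (Fin n))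
    (hH : ∀ x, HasFDerivAt (gradient f) (H x) x)
    (σ : ℝ) (hσ : 0 < σ)
    (hHLip : ∀ x y, ‖H x - H y‖ ≤ σ * ‖x - y‖)
    (x p : EuclideanSpace ℝ (Fin n)) :
    f (x + p) ≤ f x + ⟪gradient f x, p⟫ + 1/2 * ⟪H x p, p⟫ + σ/6 * ‖p‖^3 := by
  have hdf : Differentiable ℝ f := hf.differentiable two_ne_zero
  have hline : ∀ t : ℝ, HasDerivAt (fun s : ℝ => x + s • p) p t := by
    intro t
    simpa using ((hasDerivAt_id t).smul_const p).const_add x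
  -- first derivative
  have h1 : ∀ t : ℝ, HasDerivAt (fun s : ℝ => f (x + s • p))
      (⟪gradient f (x + t • p), p⟫) t := by
    intro t
    have := ((hdf (x + t • p)).hasGradientAt.hasFDerivAt).comp_hasDerivAt t (hline t)
    refine this.congr_deriv ?_
    simp [gradient]
  -- derivative of the gradient along the line
  have h2 : ∀ t : ℝ, HasDerivAt (fun s : ℝ => gradient f (x + s • p))
      (H (x + t • p) p) t := by
    intro t
    exact (hH (x + t • p)).comp_hasDerivAt t (hline t)
  -- second derivative of the 1D function
  have h3 : ∀ t : ℝ, HasDerivAt (fun s : ℝ => ⟪gradient f (x + s • p), p⟫)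
      (⟪H (x + t • p) p, p⟫) t := by
    intro t
    have := HasDerivAt.inner ℝ (h2 t) (hasDerivAt_const t p)
    simpa using this
  -- Hessian Lipschitz bound along the line
  have hHb : ∀ t ∈ Set.Icc (0:ℝ) 1,
      ⟪H (x + t • p) p, p⟫ - ⟪H x p, p⟫ ≤ σ * ‖p‖^3 * t := by
    intro t ht
    have h0 : ⟪H (x + t • p) p, p⟫ - ⟪H x p, p⟫ = ⟪(H (x + t • p) - H x) p, p⟫ := by
      simp [inner_sub_left]
    rw [h0]
    calc ⟪(H (x + t • p) - H x) p, p⟫ ≤ ‖(H (x + t • p) - H x) p‖ * ‖p‖ :=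
          real_inner_le_norm _ _
    _ ≤ (‖H (x + t • p) - H x‖ * ‖p‖) * ‖p‖ := by
          gcongr; exact (H (x + t • p) - H x).le_opNorm p
    _ ≤ ((σ * ‖x + t • p - x‖) * ‖p‖) * ‖p‖ := by
          gcongr; exact hHLip _ _
    _ = σ * ‖p‖^3 * t := by
          have : ‖x + t • p - x‖ = t * ‖p‖ := by
            simp [norm_smul, abs_of_nonneg ht.1]
          rw [this]; ring
  -- first layer: χ t ≤ 0 on [0,1]
  set c : ℝ := σ * ‖p‖^3 with hc
  have hχ : ∀ t ∈ Set.Icc (0:ℝ) 1,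
      ⟪gradient f (x + t • p), p⟫ - ⟪gradient f x, p⟫ - t * ⟪H x p, p⟫ - c * t^2 / 2 ≤ 0 := by
    apply aux_nonpos _ (fun t => ⟪H (x + t • p) p, p⟫ - ⟪H x p, p⟫ - c * t)
    · intro t
      have := (((h3 t).sub_const (⟪gradient f x, p⟫)).sub
          ((hasDerivAt_id t).const_mul (⟪H x p, p⟫) )).sub
          (((hasDerivAt_pow 2 t).const_mul c).div_const 2)
      refine (this.congr_of_eventuallyEq (Filter.Eventually.of_forall fun s => ?_)).congr_deriv ?_
      · simp only [Pi.sub_apply, id_eq]; ring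
      · norm_num; ring
    · simp
    · intro t ht
      have := hHb t ht
      nlinarith [this]
  -- second layer: ψ 1 ≤ 0
  have hψ : ∀ t ∈ Set.Icc (0:ℝ) 1,
      f (x + t • p) - f x - t * ⟪gradient f x, p⟫ - t^2 / 2 * ⟪H x p, p⟫ - c * t^3 / 6 ≤ 0 := by
    apply aux_nonpos _
      (fun t => ⟪gradient f (x + t • p), p⟫ - ⟪gradient f x, p⟫ - t * ⟪H x p, p⟫ - c * t^2 / 2)
    · intro t
      have := ((((h1 t).sub_const (f x)).sub
          ((hasDerivAt_id t).const_mul (⟪gradient f x, p⟫))).sub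
          (((hasDerivAt_pow 2 t).div_const 2).mul_const (⟪H x p, p⟫))).sub
          (((hasDerivAt_pow 3 t).const_mul c).div_const 6)
      refine (this.congr_of_eventuallyEq (Filter.Eventually.of_forall fun s => ?_)).congr_deriv ?_
      · simp only [Pi.sub_apply, id_eq]; ring
      · norm_num; ring
    · simp
    · exact hχ
  have := hψ 1 (Set.right_mem_Icc.2 zero_le_one)
  simp only [one_smul, one_pow, one_mul] at this
  linarith

/-- decrease along a negative curvature step with fixed stepsize. -/
theorem two_step_negative_curvature_decrease
    (n : ℕ) (hn : 1 ≤ n)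
    (f : EuclideanSpace ℝ (Fin n) → ℝ) (hf : ContDiff ℝ 2 f)
    (H : EuclideanSpace ℝ (Fin n) → EuclideanSpace ℝ (Fin n) →L[ℝ] EuclideanSpace ℝ (Fin n))
    (hH : ∀ x, HasFDerivAt (gradient f) (H x) x)
    (hHsym : ∀ x u v, ⟪H x u, v⟫ = ⟪u, H x v⟫)
    (lam : EuclideanSpace ℝ (Fin n) → ℝ)
    (hlam : ∀ x, lam x =
      sInf {r : ℝ | ∃ u : EuclideanSpace ℝ (Fin n), ‖u‖ = 1 ∧ r = ⟪u, H x u⟫})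
    (σ : ℝ) (hσ : 0 < σ)
    (hHLip : ∀ x y, ‖H x - H y‖ ≤ σ * ‖x - y‖)
    (x : EuclideanSpace ℝ (Fin n)) (hx : lam x < 0)
    (γ θ : ℝ) (hγ : γ ∈ Set.Ioc (0 : ℝ) 1) (hθ : 0 < θ)
    (d : EuclideanSpace ℝ (Fin n))
    (hd1 : ⟪d, H x d⟫ ≤ γ * lam x * ‖d‖ ^ 2)
    (hd2 : ⟪gradient f x, d⟫ ≤ 0)
    (hd3 : ‖d‖ = θ * |lam x|) :
    ∀ β ∈ Set.Ioo (0 : ℝ) (3 * γ / (σ * θ)),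
      f (x + β • d) ≤ f x - (1/2 * β ^ 2 * θ ^ 2 * (γ - 1/3 * σ * β * θ)) * |lam x| ^ 3 ∧
      0 < 1/2 * β ^ 2 * θ ^ 2 * (γ - 1/3 * σ * β * θ) := by
  intro β hβ
  obtain ⟨hβ0, hβ1⟩ := hβ
  have hσθ : 0 < σ * θ := mul_pos hσ hθ
  have hβσθ : σ * β * θ < 3 * γ := by
    have := (lt_div_iff₀ hσθ).1 hβ1
    nlinarith
  have hc1 : 0 < 1/2 * β ^ 2 * θ ^ 2 * (γ - 1/3 * σ * β * θ) := by
    have : 0 < γ - 1/3 * σ * β * θ := by linarith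
    positivity
  refine ⟨?_, hc1⟩
  have key := cubic_bound n f hf H hH σ hσ hHLip x (β • d)
  have habs : |lam x| = -lam x := abs_of_neg hx
  have hHq : ⟪H x (β • d), β • d⟫ = β^2 * ⟪d, H x d⟫ := by
    rw [map_smul, real_inner_smul_left, real_inner_smul_right, hHsym]
    ring
  have hnorm : ‖β • d‖ = β * (θ * |lam x|) := by
    rw [norm_smul, hd3, Real.norm_eq_abs, abs_of_pos hβ0]
  have hg : ⟪gradient f x, β • d⟫ = β * ⟪gradient f x, d⟫ := real_inner_smul_right _ _ _
  rw [hHq, hg, hnorm] at key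
  have hdsq : ‖d‖^2 = θ^2 * |lam x|^2 := by rw [hd3]; ring
  have hgd : β * ⟪gradient f x, d⟫ ≤ 0 :=
    mul_nonpos_of_nonneg_of_nonpos hβ0.le hd2
  have h2 : β^2 * ⟪d, H x d⟫ ≤ -(β^2 * γ * θ^2 * |lam x|^3) := by
    calc β^2 * ⟪d, H x d⟫ ≤ β^2 * (γ * lam x * (θ^2 * |lam x|^2)) := by
          rw [← hdsq]; nlinarith [sq_nonneg β]
    _ = -(β^2 * γ * θ^2 * |lam x|^3) := by rw [habs]; ring
  have h4 : σ/6 * (β * (θ * |lam x|))^3 = σ * β^3 * θ^3 * |lam x|^3 / 6 := by ring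
  nlinarith [key, hgd, h2, h4]
end

section
/- Suppose the gradient map g is Lipschitz continuous with constant L > 0. Let x̂ ∈ E with g(x̂) ≠ 0, let δ, ζ ∈ (0,1] and η ∈ [1,∞), and let ŝ ∈ E satisfy −⟪g(x̂), ŝ⟫ ≥ δ ‖ŝ‖ ‖g(x̂)‖ and ζ ‖g(x̂)‖ ≤ ‖ŝ‖ ≤ η ‖g(x̂)‖. Then for every α ∈ (0, 2δζ/(Lη²)) one has f(x̂ + α ŝ) ≤ f(x̂) − c₂(α) ‖g(x̂)‖², where c₂(α) := α (δζ − (1/2) L α η²), and moreover c₂(α) > 0. -/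
open scoped RealInnerProductSpace

/-- Descent lemma: Lipschitz gradient gives quadratic upper bound along a ray. -/
theorem descent_lemma_aux
    (n : ℕ)
    (f : EuclideanSpace ℝ (Fin n) → ℝ) (hf : ContDiff ℝ 1 f)
    (L : ℝ) (hL : 0 < L)
    (hgLip : ∀ x y, ‖gradient f x - gradient f y‖ ≤ L * ‖x - y‖)
    (x s : EuclideanSpace ℝ (Fin n)) (α : ℝ) (hα : 0 ≤ α) :
    f (x + α • s) ≤ f x + α * ⟪gradient f x, s⟫ + L * α ^ 2 / 2 * ‖s‖ ^ 2 := by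
  have hdf : Differentiable ℝ f := hf.differentiable one_ne_zero
  set h : ℝ → ℝ := fun t => f (x + t • s) - t * ⟪gradient f x, s⟫ - L * t ^ 2 / 2 * ‖s‖ ^ 2
    with hh
  have hder : ∀ t : ℝ, HasDerivAt h
      (⟪gradient f (x + t • s), s⟫ - ⟪gradient f x, s⟫ - L * t * ‖s‖ ^ 2) t := by
    intro t
    have hc : HasDerivAt (fun t : ℝ => x + t • s) s t := by
      simpa using ((hasDerivAt_id t).smul_const s).const_add x
    have hg : HasGradientAt f (gradient f (x + t • s)) (x + t • s) :=
      (hdf (x + t • s)).hasGradientAt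
    have h1 : HasDerivAt (fun t : ℝ => f (x + t • s)) ⟪gradient f (x + t • s), s⟫ t := by
      have := (hg.hasFDerivAt.comp_hasDerivAt t hc)
      exact this
    have h2 : HasDerivAt (fun t : ℝ => t * ⟪gradient f x, s⟫) ⟪gradient f x, s⟫ t := by
      simpa using (hasDerivAt_id t).mul_const ⟪gradient f x, s⟫
    have h3 : HasDerivAt (fun t : ℝ => L * t ^ 2 / 2 * ‖s‖ ^ 2) (L * t * ‖s‖ ^ 2) t := by
      have : HasDerivAt (fun t : ℝ => t ^ 2) (2 * t) t := by
        simpa using hasDerivAt_pow 2 t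
      have := ((this.const_mul L).div_const 2).mul_const (‖s‖ ^ 2)
      refine this.congr_deriv ?_
      ring
    exact (h1.sub h2).sub h3
  have hmono : AntitoneOn h (Set.Icc 0 α) := by
    apply antitoneOn_of_deriv_nonpos (convex_Icc 0 α)
    · exact Continuous.continuousOn (by
        have : Continuous fun t : ℝ => f (x + t • s) :=
          hdf.continuous.comp (by continuity)
        fun_prop)
    · intro t ht
      exact (hder t).differentiableAt.differentiableWithinAt
    · intro t ht
      rw [interior_Icc] at ht
      rw [(hder t).deriv]
      have hbound : ⟪gradient f (x + t • s) - gradient f x, s⟫ ≤ L * t * ‖s‖ ^ 2 := by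
        calc ⟪gradient f (x + t • s) - gradient f x, s⟫
            ≤ ‖gradient f (x + t • s) - gradient f x‖ * ‖s‖ := real_inner_le_norm _ _
          _ ≤ (L * ‖(x + t • s) - x‖) * ‖s‖ := by
              have := hgLip (x + t • s) x
              nlinarith [norm_nonneg s]
          _ = L * t * ‖s‖ ^ 2 := by
              rw [add_sub_cancel_left, norm_smul]
              simp [abs_of_pos ht.1]
              ring
      have : ⟪gradient f (x + t • s), s⟫ - ⟪gradient f x, s⟫
          = ⟪gradient f (x + t • s) - gradient f x, s⟫ := by
        rw [inner_sub_left]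
      linarith
  have hmA := hmono (Set.left_mem_Icc.2 hα) (Set.right_mem_Icc.2 hα) hα
  have h0 : h 0 = f x := by
    simp only [hh, zero_smul, add_zero, zero_mul, ne_eq, OfNat.ofNat_ne_zero,
      not_false_eq_true, zero_pow, mul_zero, zero_div, sub_zero]
  have hA : h α = f (x + α • s) - α * ⟪gradient f x, s⟫ - L * α ^ 2 / 2 * ‖s‖ ^ 2 := rfl
  rw [hA, h0] at hmA
  linarith

/-- decrease along a descent step with fixed stepsize. -/
theorem two_step_descent_decrease
    (n : ℕ) (hn : 1 ≤ n)
    (f : EuclideanSpace ℝ (Fin n) → ℝ) (hf : ContDiff ℝ 1 f)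
    (L : ℝ) (hL : 0 < L)
    (hgLip : ∀ x y, ‖gradient f x - gradient f y‖ ≤ L * ‖x - y‖)
    (xhat : EuclideanSpace ℝ (Fin n)) (hxhat : gradient f xhat ≠ 0)
    (δ ζ : ℝ) (hδ : δ ∈ Set.Ioc (0 : ℝ) 1) (hζ : ζ ∈ Set.Ioc (0 : ℝ) 1)
    (η : ℝ) (hη : 1 ≤ η)
    (shat : EuclideanSpace ℝ (Fin n))
    (hs1 : -⟪gradient f xhat, shat⟫ ≥ δ * ‖shat‖ * ‖gradient f xhat‖)
    (hs2 : ζ * ‖gradient f xhat‖ ≤ ‖shat‖)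
    (hs3 : ‖shat‖ ≤ η * ‖gradient f xhat‖) :
    ∀ α ∈ Set.Ioo (0 : ℝ) (2 * δ * ζ / (L * η ^ 2)),
      f (xhat + α • shat) ≤
        f xhat - (α * (δ * ζ - 1/2 * L * α * η ^ 2)) * ‖gradient f xhat‖ ^ 2 ∧
      0 < α * (δ * ζ - 1/2 * L * α * η ^ 2) := by
  intro α hα
  obtain ⟨hα0, hα1⟩ := hα
  have hg0 : 0 < ‖gradient f xhat‖ := norm_pos_iff.mpr hxhat
  have hη0 : 0 < η := lt_of_lt_of_le one_pos hη
  have hden : 0 < L * η ^ 2 := by positivity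
  have hαlt : α * (L * η ^ 2) < 2 * δ * ζ := by
    rwa [← lt_div_iff₀ hden]
  constructor
  · have key := descent_lemma_aux n f hf L hL hgLip xhat shat α hα0.le
    have h1 : α * ⟪gradient f xhat, shat⟫ ≤ -(α * δ * ζ * ‖gradient f xhat‖ ^ 2) := by
      have : ⟪gradient f xhat, shat⟫ ≤ -(δ * ‖shat‖ * ‖gradient f xhat‖) := by linarith
      have h2 : δ * (ζ * ‖gradient f xhat‖) * ‖gradient f xhat‖
          ≤ δ * ‖shat‖ * ‖gradient f xhat‖ := by
        nlinarith [mul_le_mul_of_nonneg_left (mul_le_mul_of_nonneg_right hs2 hg0.le) hδ.1.le]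
      nlinarith
    have h3 : L * α ^ 2 / 2 * ‖shat‖ ^ 2
        ≤ L * α ^ 2 / 2 * (η ^ 2 * ‖gradient f xhat‖ ^ 2) := by
      have : ‖shat‖ ^ 2 ≤ (η * ‖gradient f xhat‖) ^ 2 := by
        nlinarith [norm_nonneg shat]
      nlinarith [mul_le_mul_of_nonneg_left this (by positivity : (0:ℝ) ≤ L * α ^ 2 / 2)]
    nlinarith
  · have : 0 < δ * ζ - 1/2 * L * α * η ^ 2 := by nlinarith
    positivity
end

section
/- (Convergence of the two-step method.) Suppose f is bounded below by f_inf ∈ ℝ, g is Lipschitz with constant L > 0, and H is Lipschitz in operator norm with constant σ > 0. Fix γ, δ, ζ ∈ (0,1], θ > 0, η ∈ [1,∞), α ∈ (0, 2δζ/(Lη²)), and β ∈ (0, 3γ/(σθ)). Let sequences (x_k), (x̂_k), (d_k), (ŝ_k) in E (k ∈ ℕ, k ≥ 1) satisfy for every k: (i) if λ(x_k) ≥ 0 then d_k = 0, and otherwise ⟪d_k, H(x_k) d_k⟫ ≤ γ λ(x_k) ‖d_k‖², ⟪g(x_k), d_k⟫ ≤ 0, and ‖d_k‖ = θ|λ(x_k)|;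 (ii) x̂_k = x_k + β d_k; (iii) if g(x̂_k) = 0 then ŝ_k = 0, and otherwise −⟪g(x̂_k), ŝ_k⟫ ≥ δ ‖ŝ_k‖ ‖g(x̂_k)‖ and ζ ‖g(x̂_k)‖ ≤ ‖ŝ_k‖ ≤ η ‖g(x̂_k)‖; (iv) x_{k+1} = x̂_k + α ŝ_k. Then ‖g(x_k)‖ → 0 as k → ∞ and liminf_{k→∞} λ(x_k) ≥ 0. -/
open scoped RealInnerProductSpace
open Filter Topology

set_option linter.unusedSectionVars false
set_option linter.unusedVariables false
set_option maxHeartbeats 1000000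

section helpers

variable {E : Type*} [NormedAddCommGroup E] [InnerProductSpace ℝ E] [CompleteSpace E]

lemma aux_decreasing (u u' : ℝ → ℝ)
    (hu : ∀ t, HasDerivAt u (u' t) t)
    (h : ∀ t ∈ Set.Icc (0:ℝ) 1, u' t ≤ 0) : u 1 ≤ u 0 := by
  have ha : AntitoneOn u (Set.Icc 0 1) := by
    apply antitoneOn_of_deriv_nonpos (convex_Icc 0 1)
    · exact fun t _ => (hu t).continuousAt.continuousWithinAt
    · intro t ht
      exact (hu t).differentiableAt.differentiableWithinAt
    · intro t ht
      rw [(hu t).deriv]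
      exact h t (interior_subset ht)
  exact ha (Set.left_mem_Icc.2 zero_le_one) (Set.right_mem_Icc.2 zero_le_one) zero_le_one

lemma line_hasDerivAt (x v : E) (t : ℝ) :
    HasDerivAt (fun t : ℝ => x + t • v) v t := by
  simpa using ((hasDerivAt_id t).smul_const v).const_add x

lemma f_line_hasDerivAt (f : E → ℝ) (hf : Differentiable ℝ f) (x v : E) (t : ℝ) :
    HasDerivAt (fun t : ℝ => f (x + t • v)) ⟪gradient f (x + t • v), v⟫ t := by
  have hgrad := (hf (x + t • v)).hasGradientAt.hasFDerivAt
  have := hgrad.comp_hasDerivAt t (line_hasDerivAt x v t)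
  simpa only [Function.comp_def, InnerProductSpace.toDual_apply_apply] using this

lemma grad_taylor (f : E → ℝ)
    (H : E → E →L[ℝ] E) (hH : ∀ x, HasFDerivAt (gradient f) (H x) x)
    (σ : ℝ) (hσ : 0 ≤ σ) (hHLip : ∀ x y, ‖H x - H y‖ ≤ σ * ‖x - y‖)
    (x v : E) :
    ‖gradient f (x + v) - gradient f x - H x v‖ ≤ σ / 2 * ‖v‖ ^ 2 := by
  set g := gradient f with hg
  set χ : ℝ → E := fun t => g (x + t • v) - g x - t • (H x v) with hχdef
  have hχ : ∀ t, HasDerivAt χ (H (x + t • v) v - H x v) t := by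
    intro t
    have h1 : HasDerivAt (fun t : ℝ => g (x + t • v)) (H (x + t • v) v) t := by
      have h := (hH (x + t • v)).comp_hasDerivAt t (line_hasDerivAt x v t); exact h
    have h2 : HasDerivAt (fun t : ℝ => t • (H x v)) (H x v) t := by
      simpa using (hasDerivAt_id t).smul_const (H x v)
    exact (h1.sub_const (g x)).sub h2
  have hχ0 : χ 0 = 0 := by simp [hχdef]
  have hχ1 : χ 1 = g (x + v) - g x - H x v := by simp [hχdef]
  have hderbd : ∀ t ∈ Set.Icc (0:ℝ) 1, ‖H (x + t • v) v - H x v‖ ≤ σ * t * ‖v‖ ^ 2 := by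
    intro t ht
    have h1 : ‖H (x + t • v) v - H x v‖ ≤ ‖H (x + t • v) - H x‖ * ‖v‖ := by
      have := (H (x + t • v) - H x).le_opNorm v
      simpa using this
    have h2 : ‖H (x + t • v) - H x‖ ≤ σ * (t * ‖v‖) := by
      have := hHLip (x + t • v) x
      simpa [norm_smul, abs_of_nonneg ht.1] using this
    calc ‖H (x + t • v) v - H x v‖ ≤ σ * (t * ‖v‖) * ‖v‖ := by
          refine h1.trans ?_
          exact mul_le_mul_of_nonneg_right h2 (norm_nonneg v)
      _ = σ * t * ‖v‖ ^ 2 := by ring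
  rcases eq_or_ne (g (x + v) - g x - H x v) 0 with h0 | h0
  · rw [h0, norm_zero]; positivity
  · set c := ‖g (x + v) - g x - H x v‖ with hc
    have hcpos : 0 < c := norm_pos_iff.2 h0
    set w : E := c⁻¹ • (g (x + v) - g x - H x v) with hw
    have hwnorm : ‖w‖ = 1 := by
      rw [hw, norm_smul, norm_inv, Real.norm_eq_abs, abs_of_pos hcpos, ← hc,
        inv_mul_cancel₀ hcpos.ne']
    set u : ℝ → ℝ := fun t => ⟪w, χ t⟫ - σ / 2 * ‖v‖ ^ 2 * t ^ 2 with hu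
    have hu' : ∀ t, HasDerivAt u (⟪w, H (x + t • v) v - H x v⟫ - σ * ‖v‖ ^ 2 * t) t := by
      intro t
      have h1 : HasDerivAt (fun t => ⟪w, χ t⟫) ⟪w, H (x + t • v) v - H x v⟫ t := by
        have := (innerSL ℝ w).hasFDerivAt.comp_hasDerivAt t (hχ t)
        simpa [Function.comp_def] using this
      have h2 : HasDerivAt (fun t : ℝ => σ / 2 * ‖v‖ ^ 2 * t ^ 2) (σ * ‖v‖ ^ 2 * t) t := by
        have := (hasDerivAt_pow 2 t).const_mul (σ / 2 * ‖v‖ ^ 2)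
        exact this.congr_deriv (by ring)
      exact h1.sub h2
    have hule : u 1 ≤ u 0 := by
      apply aux_decreasing u _ hu'
      intro t ht
      have h1 : ⟪w, H (x + t • v) v - H x v⟫ ≤ σ * ‖v‖ ^ 2 * t := by
        calc ⟪w, H (x + t • v) v - H x v⟫ ≤ ‖w‖ * ‖H (x + t • v) v - H x v‖ :=
              real_inner_le_norm _ _
          _ ≤ 1 * (σ * t * ‖v‖ ^ 2) := by
              apply mul_le_mul (le_of_eq hwnorm) (hderbd t ht) (norm_nonneg _) zero_le_one
          _ = σ * ‖v‖ ^ 2 * t := by ring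
      linarith
    have hu0 : u 0 = 0 := by simp [hu, hχ0]
    have hu1 : u 1 = c - σ / 2 * ‖v‖ ^ 2 := by
      rw [hu]
      simp only [hχ1, one_pow, mul_one]
      congr 1
      rw [hw, real_inner_smul_left, real_inner_self_eq_norm_sq, ← hc]
      field_simp
    rw [hu0, hu1] at hule
    linarith


lemma cubic_descent (f : E → ℝ) (hf : Differentiable ℝ f)
    (H : E → E →L[ℝ] E) (hH : ∀ x, HasFDerivAt (gradient f) (H x) x)
    (σ : ℝ) (hσ : 0 ≤ σ) (hHLip : ∀ x y, ‖H x - H y‖ ≤ σ * ‖x - y‖)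
    (x v : E) :
    f (x + v) ≤ f x + ⟪gradient f x, v⟫ + 1 / 2 * ⟪v, H x v⟫ + σ / 6 * ‖v‖ ^ 3 := by
  set g := gradient f with hg
  set u : ℝ → ℝ := fun t =>
    f (x + t • v) - t * ⟪g x, v⟫ - t ^ 2 / 2 * ⟪v, H x v⟫ - σ / 6 * ‖v‖ ^ 3 * t ^ 3 with hu
  have hu' : ∀ t, HasDerivAt u
      (⟪g (x + t • v), v⟫ - ⟪g x, v⟫ - t * ⟪v, H x v⟫ - σ / 2 * ‖v‖ ^ 3 * t ^ 2) t := by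
    intro t
    have h1 := f_line_hasDerivAt f hf x v t
    have h2 : HasDerivAt (fun t : ℝ => t * ⟪g x, v⟫) ⟪g x, v⟫ t := by
      simpa using (hasDerivAt_id t).mul_const (⟪g x, v⟫)
    have h3 : HasDerivAt (fun t : ℝ => t ^ 2 / 2 * ⟪v, H x v⟫) (t * ⟪v, H x v⟫) t := by
      have := ((hasDerivAt_pow 2 t).div_const 2).mul_const (⟪v, H x v⟫)
      exact this.congr_deriv (by ring)
    have h4 : HasDerivAt (fun t : ℝ => σ / 6 * ‖v‖ ^ 3 * t ^ 3) (σ / 2 * ‖v‖ ^ 3 * t ^ 2) t := by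
      have := (hasDerivAt_pow 3 t).const_mul (σ / 6 * ‖v‖ ^ 3)
      exact this.congr_deriv (by ring)
    exact ((h1.sub h2).sub h3).sub h4
  have hle : u 1 ≤ u 0 := by
    apply aux_decreasing u _ hu'
    intro t ht
    have key : ⟪g (x + t • v) - g x - H x (t • v), v⟫ ≤ σ / 2 * t ^ 2 * ‖v‖ ^ 3 := by
      calc ⟪g (x + t • v) - g x - H x (t • v), v⟫
          ≤ ‖g (x + t • v) - g x - H x (t • v)‖ * ‖v‖ := real_inner_le_norm _ _
        _ ≤ σ / 2 * ‖t • v‖ ^ 2 * ‖v‖ :=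
            mul_le_mul_of_nonneg_right (grad_taylor f H hH σ hσ hHLip x (t • v)) (norm_nonneg v)
        _ = σ / 2 * t ^ 2 * ‖v‖ ^ 3 := by
            rw [norm_smul, Real.norm_eq_abs, abs_of_nonneg ht.1]; ring
    have hexp : ⟪g (x + t • v) - g x - H x (t • v), v⟫
        = ⟪g (x + t • v), v⟫ - ⟪g x, v⟫ - t * ⟪v, H x v⟫ := by
      rw [sub_sub, inner_sub_left, inner_add_left, map_smul, real_inner_smul_left,
        real_inner_comm v (H x v)]
      ring
    rw [hexp] at key
    linarith
  have h0 : u 0 = f x := by simp [hu]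
  have h1 : u 1 = f (x + v) - ⟪g x, v⟫ - 1 / 2 * ⟪v, H x v⟫ - σ / 6 * ‖v‖ ^ 3 := by
    simp [hu]
  rw [h0, h1] at hle
  linarith

lemma quad_descent (f : E → ℝ) (hf : Differentiable ℝ f)
    (L : ℝ) (hL : 0 ≤ L) (hgLip : ∀ x y, ‖gradient f x - gradient f y‖ ≤ L * ‖x - y‖)
    (x v : E) :
    f (x + v) ≤ f x + ⟪gradient f x, v⟫ + L / 2 * ‖v‖ ^ 2 := by
  set g := gradient f with hg
  set u : ℝ → ℝ := fun t =>
    f (x + t • v) - t * ⟪g x, v⟫ - L / 2 * ‖v‖ ^ 2 * t ^ 2 with hu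
  have hu' : ∀ t, HasDerivAt u
      (⟪g (x + t • v), v⟫ - ⟪g x, v⟫ - L * ‖v‖ ^ 2 * t) t := by
    intro t
    have h1 := f_line_hasDerivAt f hf x v t
    have h2 : HasDerivAt (fun t : ℝ => t * ⟪g x, v⟫) ⟪g x, v⟫ t := by
      simpa using (hasDerivAt_id t).mul_const (⟪g x, v⟫)
    have h3 : HasDerivAt (fun t : ℝ => L / 2 * ‖v‖ ^ 2 * t ^ 2) (L * ‖v‖ ^ 2 * t) t := by
      have := (hasDerivAt_pow 2 t).const_mul (L / 2 * ‖v‖ ^ 2)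
      exact this.congr_deriv (by ring)
    exact (h1.sub h2).sub h3
  have hle : u 1 ≤ u 0 := by
    apply aux_decreasing u _ hu'
    intro t ht
    have key : ⟪g (x + t • v) - g x, v⟫ ≤ L * t * ‖v‖ ^ 2 := by
      calc ⟪g (x + t • v) - g x, v⟫ ≤ ‖g (x + t • v) - g x‖ * ‖v‖ := real_inner_le_norm _ _
        _ ≤ L * ‖t • v‖ * ‖v‖ := by
            refine mul_le_mul_of_nonneg_right ?_ (norm_nonneg v)
            simpa using hgLip (x + t • v) x
        _ = L * t * ‖v‖ ^ 2 := by
            rw [norm_smul, Real.norm_eq_abs, abs_of_nonneg ht.1]; ring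
    have hexp : ⟪g (x + t • v) - g x, v⟫ = ⟪g (x + t • v), v⟫ - ⟪g x, v⟫ := by
      rw [inner_sub_left]
    rw [hexp] at key
    linarith
  have h0 : u 0 = f x := by simp [hu]
  have h1 : u 1 = f (x + v) - ⟪g x, v⟫ - L / 2 * ‖v‖ ^ 2 := by simp [hu]
  rw [h0, h1] at hle
  linarith

end helpers

/-- convergence of the two-step method. -/
theorem two_step_method_convergence
    (n : ℕ) (hn : 1 ≤ n)
    (f : EuclideanSpace ℝ (Fin n) → ℝ) (hf : ContDiff ℝ 2 f)
    (f_inf : ℝ) (hfbdd : ∀ y, f_inf ≤ f y)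
    (H : EuclideanSpace ℝ (Fin n) → EuclideanSpace ℝ (Fin n) →L[ℝ] EuclideanSpace ℝ (Fin n))
    (hH : ∀ x, HasFDerivAt (gradient f) (H x) x)
    (hHsym : ∀ x u v, ⟪H x u, v⟫ = ⟪u, H x v⟫)
    (lam : EuclideanSpace ℝ (Fin n) → ℝ)
    (hlam : ∀ x, lam x =
      sInf {r : ℝ | ∃ u : EuclideanSpace ℝ (Fin n), ‖u‖ = 1 ∧ r = ⟪u, H x u⟫})
    (L : ℝ) (hL : 0 < L)
    (hgLip : ∀ x y, ‖gradient f x - gradient f y‖ ≤ L * ‖x - y‖)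
    (σ : ℝ) (hσ : 0 < σ)
    (hHLip : ∀ x y, ‖H x - H y‖ ≤ σ * ‖x - y‖)
    (γ δ ζ : ℝ) (hγ : γ ∈ Set.Ioc (0 : ℝ) 1) (hδ : δ ∈ Set.Ioc (0 : ℝ) 1)
    (hζ : ζ ∈ Set.Ioc (0 : ℝ) 1)
    (θ : ℝ) (hθ : 0 < θ) (η : ℝ) (hη : 1 ≤ η)
    (α : ℝ) (hα : α ∈ Set.Ioo (0 : ℝ) (2 * δ * ζ / (L * η ^ 2)))
    (β : ℝ) (hβ : β ∈ Set.Ioo (0 : ℝ) (3 * γ / (σ * θ)))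
    (x xhat d shat : ℕ → EuclideanSpace ℝ (Fin n))
    (hd0 : ∀ k, 0 ≤ lam (x k) → d k = 0)
    (hd : ∀ k, lam (x k) < 0 →
      ⟪d k, H (x k) (d k)⟫ ≤ γ * lam (x k) * ‖d k‖ ^ 2 ∧
      ⟪gradient f (x k), d k⟫ ≤ 0 ∧ ‖d k‖ = θ * |lam (x k)|)
    (hxhat : ∀ k, xhat k = x k + β • d k)
    (hs0 : ∀ k, gradient f (xhat k) = 0 → shat k = 0)
    (hs : ∀ k, gradient f (xhat k) ≠ 0 →
      -⟪gradient f (xhat k), shat k⟫ ≥ δ * ‖shat k‖ * ‖gradient f (xhat k)‖ ∧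
      ζ * ‖gradient f (xhat k)‖ ≤ ‖shat k‖ ∧ ‖shat k‖ ≤ η * ‖gradient f (xhat k)‖)
    (hxnext : ∀ k, x (k + 1) = xhat k + α • shat k) :
    Tendsto (fun k => ‖gradient f (x k)‖) atTop (nhds 0) ∧
    (0 : EReal) ≤ liminf (fun k => (lam (x k) : EReal)) atTop := by
  obtain ⟨hα0, hα2⟩ := hα
  obtain ⟨hβ0, hβ2⟩ := hβ
  obtain ⟨hγ0, hγ1⟩ := hγ
  obtain ⟨hδ0, hδ1⟩ := hδ
  obtain ⟨hζ0, hζ1⟩ := hζ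
  have hfd : Differentiable ℝ f := hf.differentiable (by norm_num)
  -- constants
  have hαL : α * (L * η ^ 2) < 2 * δ * ζ := (lt_div_iff₀ (by positivity)).1 hα2
  have hLαη : L * α * η / 2 < δ := by
    nlinarith [mul_nonneg (mul_nonneg hL.le hα0.le) (sub_nonneg.2 hη),
      mul_pos hL hα0, mul_pos (mul_pos hL hα0) (lt_of_lt_of_le one_pos hη)]
  have hσβθ : σ * β * θ < 3 * γ := by
    have := (lt_div_iff₀ (mul_pos hσ hθ)).1 hβ2
    nlinarith
  set c1 : ℝ := β ^ 2 * θ ^ 2 * (γ / 2 - σ * β * θ / 6) with hc1def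
  set c2 : ℝ := α * ζ * (δ - L * α * η / 2) with hc2def
  have hc1 : 0 < c1 := by
    apply mul_pos (by positivity)
    linarith
  have hc2 : 0 < c2 := by
    apply mul_pos (by positivity)
    linarith
  set m : ℕ → ℝ := fun k => max (-(lam (x k))) 0 with hmdef
  have hm0 : ∀ k, 0 ≤ m k := fun k => le_max_right _ _
  have hdnorm : ∀ k, ‖d k‖ = θ * m k := by
    intro k
    by_cases hk : lam (x k) < 0
    · have h3 := (hd k hk).2.2
      have hmk : m k = -(lam (x k)) := max_eq_left (by linarith)
      rw [h3, abs_of_neg hk, hmk]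
    · have : d k = 0 := hd0 k (not_lt.1 hk)
      have hmk : m k = 0 := max_eq_right (by linarith [not_lt.1 hk])
      rw [this, hmk, norm_zero, mul_zero]
  -- Step A
  have stepA : ∀ k, f (xhat k) ≤ f (x k) - c1 * m k ^ 3 := by
    intro k
    by_cases hk : lam (x k) < 0
    · obtain ⟨h1, h2, h3⟩ := hd k hk
      have hmk : lam (x k) = -(m k) := by
        have : m k = -(lam (x k)) := max_eq_left (by linarith)
        rw [this]; ring
      have hcd := cubic_descent f hfd H hH σ hσ.le hHLip (x k) (β • d k)
      rw [← hxhat k] at hcd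
      have hip : ⟪gradient f (x k), β • d k⟫ ≤ 0 := by
        rw [real_inner_smul_right]
        exact mul_nonpos_of_nonneg_of_nonpos hβ0.le h2
      have hquad : ⟪β • d k, H (x k) (β • d k)⟫ = β ^ 2 * ⟪d k, H (x k) (d k)⟫ := by
        rw [map_smul, real_inner_smul_left, real_inner_smul_right]; ring
      have hnormd : ‖d k‖ = θ * m k := hdnorm k
      have hcube : ‖β • d k‖ ^ 3 = β ^ 3 * (θ * m k) ^ 3 := by
        rw [norm_smul, Real.norm_eq_abs, abs_of_pos hβ0, hnormd]; ring
      have hq2 : ⟪d k, H (x k) (d k)⟫ ≤ γ * (-(m k)) * (θ * m k) ^ 2 := by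
        rw [← hmk, ← hnormd]; exact h1
      have hX : β ^ 2 * ⟪d k, H (x k) (d k)⟫ ≤ β ^ 2 * (γ * (-(m k)) * (θ * m k) ^ 2) :=
        mul_le_mul_of_nonneg_left hq2 (sq_nonneg β)
      have hid : f (x k) - c1 * m k ^ 3 =
          f (x k) + 0 + 1 / 2 * (β ^ 2 * (γ * (-(m k)) * (θ * m k) ^ 2))
            + σ / 6 * (β ^ 3 * (θ * m k) ^ 3) := by
        rw [hc1def]; ring
      rw [hquad, hcube] at hcd
      linarith
    · have hdk : d k = 0 := hd0 k (not_lt.1 hk)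
      have hx' : xhat k = x k := by rw [hxhat k, hdk, smul_zero, add_zero]
      have hmk : m k = 0 := max_eq_right (by linarith [not_lt.1 hk])
      rw [hx', hmk]
      simp
  -- Step B
  have stepB : ∀ k, f (x (k + 1)) ≤ f (xhat k) - c2 * ‖gradient f (xhat k)‖ ^ 2 := by
    intro k
    by_cases hk : gradient f (xhat k) = 0
    · have hsk := hs0 k hk
      rw [hxnext k, hsk, smul_zero, add_zero, hk]
      simp
    · obtain ⟨h1, h2, h3⟩ := hs k hk
      have hqd := quad_descent f hfd L hL.le hgLip (xhat k) (α • shat k)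
      rw [← hxnext k] at hqd
      set G := ‖gradient f (xhat k)‖ with hGdef
      set S := ‖shat k‖ with hSdef
      have hGpos : 0 < G := norm_pos_iff.2 hk
      have hS0 : 0 ≤ S := norm_nonneg _
      have hipc : ⟪gradient f (xhat k), α • shat k⟫ = α * ⟪gradient f (xhat k), shat k⟫ :=
        real_inner_smul_right _ _ _
      have hnc : ‖α • shat k‖ ^ 2 = α ^ 2 * S ^ 2 := by
        rw [norm_smul, Real.norm_eq_abs, abs_of_pos hα0]; ring
      have e1 : (δ - L * α * η / 2) * G ≤ δ * G - L * α * S / 2 := by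
        nlinarith [mul_nonneg (mul_nonneg hL.le hα0.le) (sub_nonneg.2 h3)]
      have e2 : 0 ≤ (δ - L * α * η / 2) * G := mul_nonneg (by linarith) hGpos.le
      have e3 : ζ * G * ((δ - L * α * η / 2) * G) ≤ S * (δ * G - L * α * S / 2) :=
        mul_le_mul h2 e1 e2 hS0
      have e4 := mul_le_mul_of_nonneg_left e3 hα0.le
      have hfin : c2 * G ^ 2 ≤ α * δ * S * G - L * α ^ 2 * S ^ 2 / 2 := by
        rw [hc2def]; nlinarith [e4]
      have hip2 : α * ⟪gradient f (xhat k), shat k⟫ ≤ α * (-(δ * S * G)) :=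
        mul_le_mul_of_nonneg_left (by linarith) hα0.le
      rw [hipc, hnc] at hqd
      nlinarith [hqd, hip2, hfin]
  -- telescoping
  set a : ℕ → ℝ := fun k => c1 * m k ^ 3 + c2 * ‖gradient f (xhat k)‖ ^ 2 with hadef
  have ha0 : ∀ k, 0 ≤ a k := fun k =>
    add_nonneg (mul_nonneg hc1.le (pow_nonneg (hm0 k) 3)) (mul_nonneg hc2.le (sq_nonneg _))
  have hstep : ∀ k, a k ≤ f (x k) - f (x (k + 1)) := by
    intro k
    have hA := stepA k
    have hB := stepB k
    simp only [hadef]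
    linarith
  have hsum : ∀ N, ∑ k ∈ Finset.range N, a k ≤ f (x 0) - f_inf := by
    intro N
    have hN : ∑ k ∈ Finset.range N, a k ≤ f (x 0) - f (x N) := by
      induction N with
      | zero => simp
      | succ N ih =>
        rw [Finset.sum_range_succ]
        linarith [hstep N]
    linarith [hfbdd (x N)]
  have hsummable : Summable a := summable_of_sum_range_le ha0 hsum
  have haten : Tendsto a atTop (𝓝 0) := hsummable.tendsto_atTop_zero
  have hcm3 : Tendsto (fun k => c1 * m k ^ 3) atTop (𝓝 0) :=
    squeeze_zero (fun k => mul_nonneg hc1.le (pow_nonneg (hm0 k) 3))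
      (fun k => le_add_of_nonneg_right (mul_nonneg hc2.le (sq_nonneg _))) haten
  have hcg2 : Tendsto (fun k => c2 * ‖gradient f (xhat k)‖ ^ 2) atTop (𝓝 0) :=
    squeeze_zero (fun k => mul_nonneg hc2.le (sq_nonneg _))
      (fun k => le_add_of_nonneg_left (mul_nonneg hc1.le (pow_nonneg (hm0 k) 3))) haten
  have hm3 : Tendsto (fun k => m k ^ 3) atTop (𝓝 0) := by
    have := hcm3.const_mul c1⁻¹
    simpa [← mul_assoc, inv_mul_cancel₀ hc1.ne'] using this
  have hg2 : Tendsto (fun k => ‖gradient f (xhat k)‖ ^ 2) atTop (𝓝 0) := by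
    have := hcg2.const_mul c2⁻¹
    simpa [← mul_assoc, inv_mul_cancel₀ hc2.ne'] using this
  have hm : Tendsto m atTop (𝓝 0) := by
    rw [Metric.tendsto_atTop] at hm3 ⊢
    intro ε hε
    obtain ⟨N, hN⟩ := hm3 (ε ^ 3) (by positivity)
    refine ⟨N, fun k hk => ?_⟩
    have h := hN k hk
    rw [Real.dist_eq, sub_zero, abs_of_nonneg (by positivity)] at h
    rw [Real.dist_eq, sub_zero, abs_of_nonneg (hm0 k)]
    by_contra hcon
    push_neg at hcon
    nlinarith [pow_le_pow_left₀ hε.le hcon 3]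
  have hghat : Tendsto (fun k => ‖gradient f (xhat k)‖) atTop (𝓝 0) := by
    rw [Metric.tendsto_atTop] at hg2 ⊢
    intro ε hε
    obtain ⟨N, hN⟩ := hg2 (ε ^ 2) (by positivity)
    refine ⟨N, fun k hk => ?_⟩
    have h := hN k hk
    rw [Real.dist_eq, sub_zero, abs_of_nonneg (by positivity)] at h
    rw [Real.dist_eq, sub_zero, abs_of_nonneg (norm_nonneg _)]
    by_contra hcon
    push_neg at hcon
    nlinarith [pow_le_pow_left₀ hε.le hcon 2]
  constructor
  · -- first conjunct
    have hbound : ∀ k, ‖gradient f (x k)‖ ≤ ‖gradient f (xhat k)‖ + L * β * θ * m k := by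
      intro k
      have h1 : ‖gradient f (x k) - gradient f (xhat k)‖ ≤ L * β * θ * m k := by
        have hlip := hgLip (x k) (xhat k)
        have : ‖x k - xhat k‖ = β * (θ * m k) := by
          rw [hxhat k]
          simp only [sub_add_cancel_left, norm_neg]
          rw [norm_smul, Real.norm_eq_abs, abs_of_pos hβ0, hdnorm k]
        rw [this] at hlip
        calc ‖gradient f (x k) - gradient f (xhat k)‖ ≤ L * (β * (θ * m k)) := hlip
          _ = L * β * θ * m k := by ring
      have h2 := norm_sub_norm_le (gradient f (x k)) (gradient f (xhat k))
      linarith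
    have hten : Tendsto (fun k => ‖gradient f (xhat k)‖ + L * β * θ * m k) atTop (𝓝 0) := by
      have := hghat.add (hm.const_mul (L * β * θ))
      simpa using this
    exact squeeze_zero (fun k => norm_nonneg _) hbound hten
  · -- second conjunct
    have h1 : ∀ k, ((-(m k) : ℝ) : EReal) ≤ ((lam (x k) : ℝ) : EReal) := by
      intro k
      rw [EReal.coe_le_coe_iff]
      have : -(lam (x k)) ≤ m k := le_max_left _ _
      linarith
    have h2 : Tendsto (fun k => ((-(m k) : ℝ) : EReal)) atTop (𝓝 (0 : EReal)) := by
      have hneg : Tendsto (fun k => -(m k)) atTop (𝓝 0) := by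
        simpa using hm.neg
      have : Tendsto (fun k => ((-(m k) : ℝ) : EReal)) atTop (𝓝 ((0 : ℝ) : EReal)) := by
        exact (continuous_coe_real_ereal.tendsto _).comp hneg
      simpa using this
    calc (0 : EReal) = liminf (fun k => ((-(m k) : ℝ) : EReal)) atTop := (h2.liminf_eq).symm
      _ ≤ liminf (fun k => (lam (x k) : EReal)) atTop :=
        liminf_le_liminf (Eventually.of_forall h1)
end

section
/- Let d, w ∈ E with d ≠ 0, let A be a self-adjoint continuous linear operator on E, let γ ∈ (0,1], σ_k > 0, and λ < 0, and suppose c := ⟪d, A d⟫ ≤ γ λ ‖d‖² and ⟪w, d⟫ ≤ 0. Define m_d(β) := −β ⟪w, d⟫ − (1/2) β² ⟪d, A d⟫ − (σ_k/6) β³ ‖d‖³ and β_k := (−c + √(c² − 2 σ_k ‖d‖³ ⟪w, d⟫)) / (σ_k ‖d‖³). Then m_d(β_k) ≥ (2γ³/(3σ_k²)) |λ|³. -/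
open scoped RealInnerProductSpace

/-- lower bound for the cubic model reduction at its maximizer. -/
theorem cubic_model_reduction_lower_bound
    (n : ℕ) (hn : 1 ≤ n)
    (d w : EuclideanSpace ℝ (Fin n)) (hd : d ≠ 0)
    (A : EuclideanSpace ℝ (Fin n) →L[ℝ] EuclideanSpace ℝ (Fin n))
    (hAsym : ∀ u v, ⟪A u, v⟫ = ⟪u, A v⟫)
    (γ σk lam : ℝ) (hγ : γ ∈ Set.Ioc (0 : ℝ) 1) (hσk : 0 < σk) (hlam : lam < 0)
    (c : ℝ) (hc : c = ⟪d, A d⟫)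
    (hcurv : c ≤ γ * lam * ‖d‖ ^ 2)
    (hwd : ⟪w, d⟫ ≤ 0)
    (md : ℝ → ℝ)
    (hmd : ∀ β, md β = -β * ⟪w, d⟫ - 1/2 * β ^ 2 * ⟪d, A d⟫ - σk / 6 * β ^ 3 * ‖d‖ ^ 3)
    (βk : ℝ)
    (hβk : βk = (-c + Real.sqrt (c ^ 2 - 2 * σk * ‖d‖ ^ 3 * ⟪w, d⟫)) / (σk * ‖d‖ ^ 3)) :
    md βk ≥ 2 * γ ^ 3 / (3 * σk ^ 2) * |lam| ^ 3 := by
  have hnd : (0:ℝ) < ‖d‖ := norm_pos_iff.mpr hd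
  set nd := ‖d‖ with hnd_def
  have hγ0 : (0:ℝ) < γ := hγ.1
  have ha : (0:ℝ) < σk * nd ^ 3 := by positivity
  set a := σk * nd ^ 3 with ha_def
  set b := ⟪w, d⟫ with hb_def
  have hcneg : c < 0 :=
    lt_of_le_of_lt hcurv (mul_neg_of_neg_of_pos (mul_neg_of_pos_of_neg hγ0 hlam) (by positivity))
  have hdisc : 0 ≤ c ^ 2 - 2 * σk * nd ^ 3 * b := by
    nlinarith [sq_nonneg c, mul_nonneg (mul_nonneg hσk.le (pow_nonneg hnd.le 3)) (neg_nonneg.mpr hwd)]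
  set s := Real.sqrt (c ^ 2 - 2 * σk * nd ^ 3 * b) with hs_def
  have hs2 : s ^ 2 = c ^ 2 - 2 * a * b := by
    rw [hs_def, Real.sq_sqrt hdisc, ha_def]; ring
  have hsge : -c ≤ s := by
    have h1 : Real.sqrt (c ^ 2) ≤ s := by
      apply Real.sqrt_le_sqrt
      nlinarith [mul_nonneg (mul_nonneg hσk.le (pow_nonneg hnd.le 3)) (neg_nonneg.mpr hwd)]
    rwa [Real.sqrt_sq_eq_abs, abs_of_neg hcneg] at h1
  have hβ : a * βk = -c + s := by
    rw [hβk]; field_simp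
  have hq0 : a * (a / 2 * βk ^ 2 + c * βk + b) = 0 := by
    have h2 : (a * βk + c) ^ 2 = c ^ 2 - 2 * a * b := by
      rw [← hs2]; rw [hβ]; ring
    linear_combination h2 / 2
  have hquad : a / 2 * βk ^ 2 + c * βk + b = 0 :=
    (mul_eq_zero.mp hq0).resolve_left ha.ne'
  have hmval : md βk = a / 3 * βk ^ 3 + c / 2 * βk ^ 2 := by
    rw [hmd, ← hc]
    linear_combination (-βk) * hquad + (βk ^ 3 / 6) * ha_def
  have hx : 2 * (-c) ≤ a * βk := by rw [hβ]; linarith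
  have h0 : 0 ≤ a * βk - 2 * (-c) := by linarith
  have key : 2 * (-c) ^ 3 / 3 ≤ (a * βk) ^ 3 / 3 - (-c) * (a * βk) ^ 2 / 2 := by
    nlinarith [mul_nonneg h0 (sq_nonneg (a * βk)), mul_nonneg h0 (sq_nonneg c),
      mul_nonneg (mul_nonneg h0 (by linarith : (0:ℝ) ≤ a * βk)) (by linarith : (0:ℝ) ≤ -c)]
  have main : 2 * (-c) ^ 3 / (3 * a ^ 2) ≤ a / 3 * βk ^ 3 + c / 2 * βk ^ 2 := by
    rw [div_le_iff₀ (by positivity : (0:ℝ) < 3 * a ^ 2)]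
    nlinarith [key]
  have hlam' : 0 ≤ -lam := by linarith
  have hund : γ * (-lam) * nd ^ 2 ≤ -c := by
    have he : γ * (-lam) * nd ^ 2 = -(γ * lam * nd ^ 2) := by ring
    linarith [hcurv, he.le, he.ge]
  have hu0 : 0 ≤ γ * (-lam) * nd ^ 2 := mul_nonneg (mul_nonneg hγ0.le hlam') (by positivity)
  have hcube : (γ * (-lam) * nd ^ 2) ^ 3 ≤ (-c) ^ 3 := pow_le_pow_left₀ hu0 hund 3
  have hrhs : 2 * γ ^ 3 / (3 * σk ^ 2) * (-lam) ^ 3 ≤ 2 * (-c) ^ 3 / (3 * a ^ 2) := by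
    rw [ha_def, div_mul_eq_mul_div, div_le_div_iff₀ (by positivity) (by positivity)]
    linarith [mul_le_mul_of_nonneg_left hcube (show (0:ℝ) ≤ 6 * σk ^ 2 by positivity)]
  rw [ge_iff_le, hmval, abs_of_neg hlam]
  linarith [main, hrhs]
end

section
/- Let d, w ∈ E with d ≠ 0, let A be a self-adjoint continuous linear operator on E, let σ_k > 0, and suppose c := ⟪d, A d⟫ < 0 and ⟪w, d⟫ ≤ 0. Define m_d(β) := −β ⟪w, d⟫ − (1/2) β² ⟪d, A d⟫ − (σ_k/6) β³ ‖d‖³ and β_k := (−c + √(c² − 2 σ_k ‖d‖³ ⟪w, d⟫)) / (σ_k ‖d‖³). Then β_k > 0 and β_k maximizes m_d over the positive reals, i.e., m_d(β) ≤ m_d(β_k) for all β > 0. -/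
open scoped RealInnerProductSpace

/-- the stepsize βk maximizes the cubic model reduction over the positive reals. -/
theorem cubic_model_reduction_maximizer
    (n : ℕ) (hn : 1 ≤ n)
    (d w : EuclideanSpace ℝ (Fin n)) (hd : d ≠ 0)
    (A : EuclideanSpace ℝ (Fin n) →L[ℝ] EuclideanSpace ℝ (Fin n))
    (hAsym : ∀ u v, ⟪A u, v⟫ = ⟪u, A v⟫)
    (σk : ℝ) (hσk : 0 < σk)
    (c : ℝ) (hc : c = ⟪d, A d⟫) (hcneg : c < 0)
    (hwd : ⟪w, d⟫ ≤ 0)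
    (md : ℝ → ℝ)
    (hmd : ∀ β, md β = -β * ⟪w, d⟫ - 1/2 * β ^ 2 * ⟪d, A d⟫ - σk / 6 * β ^ 3 * ‖d‖ ^ 3)
    (βk : ℝ)
    (hβk : βk = (-c + Real.sqrt (c ^ 2 - 2 * σk * ‖d‖ ^ 3 * ⟪w, d⟫)) / (σk * ‖d‖ ^ 3)) :
    0 < βk ∧ ∀ β : ℝ, 0 < β → md β ≤ md βk := by
  have hdnorm : 0 < ‖d‖ := norm_pos_iff.mpr hd
  set b : ℝ := ⟪w, d⟫ with hb
  set s : ℝ := σk * ‖d‖ ^ 3 with hs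
  have hspos : 0 < s := by positivity
  have hdisc : 0 ≤ c ^ 2 - 2 * s * b := by nlinarith
  have hDdef : c ^ 2 - 2 * σk * ‖d‖ ^ 3 * b = c ^ 2 - 2 * s * b := by rw [hs]; ring
  set D := Real.sqrt (c ^ 2 - 2 * s * b) with hD
  have hD2 : D ^ 2 = c ^ 2 - 2 * s * b := Real.sq_sqrt hdisc
  have hDge : -c ≤ D := by
    have h1 : Real.sqrt (c ^ 2) ≤ D := Real.sqrt_le_sqrt (by nlinarith)
    rwa [Real.sqrt_sq_eq_abs, abs_of_neg hcneg] at h1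
  have hβk' : βk = (-c + D) / s := by rw [hβk, hDdef]
  have hβkpos : 0 < βk := by
    rw [hβk']; exact div_pos (by linarith) hspos
  have hsβk : s * βk = -c + D := by
    rw [hβk']; field_simp
  have hroot : s * βk ^ 2 / 2 + c * βk + b = 0 := by
    have h2 : (s * βk) ^ 2 = (-c + D) ^ 2 := by rw [hsβk]
    have key : s * (s * βk ^ 2 / 2 + c * βk + b) = 0 := by
      linear_combination (1/2 : ℝ) * h2 + (1/2 : ℝ) * hD2 + c * hsβk
    rcases mul_eq_zero.mp key with h | h
    · exact absurd h (ne_of_gt hspos)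
    · exact h
  refine ⟨hβkpos, fun β hβ => ?_⟩
  have hbracket : 0 ≤ c / 2 + s / 6 * (2 * βk + β) := by
    nlinarith [hsβk, hDge, mul_pos hspos hβ]
  have hid : md βk - md β = (βk - β) ^ 2 * (c / 2 + s / 6 * (2 * βk + β)) := by
    rw [hmd, hmd, ← hc]
    rw [hs] at hroot
    linear_combination (β - βk) * hroot
  linarith [mul_nonneg (sq_nonneg (βk - β)) hbracket, hid]
end

section
/- (Per-iteration decrease of the dynamic method.) Let x ∈ E, δ, γ ∈ (0,1], L_k > 0, σ_k > 0. Let s, d ∈ E, not both zero, satisfy: either g(x) = 0 and s = 0, or s ≠ 0 and −⟪g(x), s⟫ ≥ δ ‖s‖ ‖g(x)‖; and either λ(x) ≥ 0 and d = 0, or d ≠ 0 with ⟪d, H(x) d⟫ ≤ γ λ(x) ‖d‖² < 0 and ⟪g(x), d⟫ ≤ 0. Define m_s(α) := −α ⟪g(x), s⟫ − (1/2) L_k α² ‖s‖² and m_d(β) := −β ⟪g(x), d⟫ − (1/2) β² ⟪d, H(x) d⟫ − (σ_k/6) β³ ‖d‖³; set α_k := −⟪g(x), s⟫/(L_k ‖s‖²)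 if s ≠ 0 and α_k := 0 otherwise, and set β_k := (−c + √(c² − 2 σ_k ‖d‖³ ⟪g(x), d⟫))/(σ_k ‖d‖³) with c := ⟪d, H(x) d⟫ if d ≠ 0 and β_k := 0 otherwise. Suppose x⁺ ∈ E satisfies: if m_s(α_k) ≥ m_d(β_k) then f(x⁺) ≤ f(x) − m_s(α_k), and otherwise f(x⁺) ≤ f(x) − m_d(β_k). Then f(x) − f(x⁺) ≥ max{ (δ²/(2L_k)) ‖g(x)‖², (2γ³/(3σ_k²)) |(λ(x))₋|³ }. -/
open scoped RealInnerProductSpace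

private lemma aux_cubic (A β c : ℝ) (hA : 0 < A) (hc : c < 0)
    (hlb : -2 * c ≤ A * β) :
    2 * (-c) ^ 3 / (3 * A ^ 2) ≤ A / 3 * β ^ 3 + c / 2 * β ^ 2 := by
  rw [div_le_iff₀ (by positivity)]
  have hq : 0 ≤ (A * β) ^ 2 - c / 2 * (A * β) + c ^ 2 := by
    nlinarith [sq_nonneg (A * β - c / 4), sq_nonneg c]
  nlinarith [mul_nonneg (by linarith : (0:ℝ) ≤ A * β + 2 * c) hq]

private lemma aux_compare (γ l nd c σk : ℝ) (hγ : 0 < γ) (hl : 0 ≤ l)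
    (hnd : 0 < nd) (hσ : 0 < σk) (hclb : γ * l * nd ^ 2 ≤ -c) :
    2 * γ ^ 3 / (3 * σk ^ 2) * l ^ 3 ≤ 2 * (-c) ^ 3 / (3 * (σk * nd ^ 3) ^ 2) := by
  have hclb' : (0:ℝ) ≤ γ * l * nd ^ 2 := by positivity
  have hcube := pow_le_pow_left₀ hclb' hclb 3
  rw [div_mul_eq_mul_div, div_le_div_iff₀ (by positivity) (by positivity)]
  nlinarith [mul_le_mul_of_nonneg_left hcube (show (0:ℝ) ≤ 6 * σk ^ 2 by positivity)]


/-- per-iteration decrease of the dynamic method. -/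
theorem dynamic_method_per_iteration_decrease
    (n : ℕ) (hn : 1 ≤ n)
    (f : EuclideanSpace ℝ (Fin n) → ℝ) (hf : ContDiff ℝ 2 f)
    (H : EuclideanSpace ℝ (Fin n) → EuclideanSpace ℝ (Fin n) →L[ℝ] EuclideanSpace ℝ (Fin n))
    (hH : ∀ y, HasFDerivAt (gradient f) (H y) y)
    (hHsym : ∀ y u v, ⟪H y u, v⟫ = ⟪u, H y v⟫)
    (lam : EuclideanSpace ℝ (Fin n) → ℝ)
    (hlam : ∀ y, lam y =
      sInf {r : ℝ | ∃ u : EuclideanSpace ℝ (Fin n), ‖u‖ = 1 ∧ r = ⟪u, H y u⟫})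
    (x : EuclideanSpace ℝ (Fin n))
    (δ γ : ℝ) (hδ : δ ∈ Set.Ioc (0 : ℝ) 1) (hγ : γ ∈ Set.Ioc (0 : ℝ) 1)
    (Lk σk : ℝ) (hLk : 0 < Lk) (hσk : 0 < σk)
    (s d : EuclideanSpace ℝ (Fin n))
    (hnotboth : ¬(s = 0 ∧ d = 0))
    (hs : (gradient f x = 0 ∧ s = 0) ∨
      (s ≠ 0 ∧ -⟪gradient f x, s⟫ ≥ δ * ‖s‖ * ‖gradient f x‖))
    (hd : (0 ≤ lam x ∧ d = 0) ∨
      (d ≠ 0 ∧ ⟪d, H x d⟫ ≤ γ * lam x * ‖d‖ ^ 2 ∧ γ * lam x * ‖d‖ ^ 2 < 0 ∧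
        ⟪gradient f x, d⟫ ≤ 0))
    (ms : ℝ → ℝ)
    (hms : ∀ α, ms α = -α * ⟪gradient f x, s⟫ - 1/2 * Lk * α ^ 2 * ‖s‖ ^ 2)
    (md : ℝ → ℝ)
    (hmd : ∀ β, md β = -β * ⟪gradient f x, d⟫ - 1/2 * β ^ 2 * ⟪d, H x d⟫
      - σk / 6 * β ^ 3 * ‖d‖ ^ 3)
    (αk : ℝ)
    (hαk_ne : s ≠ 0 → αk = -⟪gradient f x, s⟫ / (Lk * ‖s‖ ^ 2))
    (hαk_eq : s = 0 → αk = 0)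
    (βk : ℝ)
    (hβk_ne : d ≠ 0 → βk = (-⟪d, H x d⟫ +
      Real.sqrt (⟪d, H x d⟫ ^ 2 - 2 * σk * ‖d‖ ^ 3 * ⟪gradient f x, d⟫)) / (σk * ‖d‖ ^ 3))
    (hβk_eq : d = 0 → βk = 0)
    (xplus : EuclideanSpace ℝ (Fin n))
    (hstep_s : ms αk ≥ md βk → f xplus ≤ f x - ms αk)
    (hstep_d : ms αk < md βk → f xplus ≤ f x - md βk) :
    f x - f xplus ≥
      max (δ ^ 2 / (2 * Lk) * ‖gradient f x‖ ^ 2)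
        (2 * γ ^ 3 / (3 * σk ^ 2) * |min 0 (lam x)| ^ 3) := by

  have key : f x - f xplus ≥ max (ms αk) (md βk) := by
    rcases le_or_gt (md βk) (ms αk) with h | h
    · have h2 := hstep_s h
      rw [max_eq_left h]; linarith
    · have h2 := hstep_d h
      rw [max_eq_right h.le]; linarith
  refine le_trans (max_le_max ?_ ?_) key
  · -- gradient part
    rcases hs with ⟨hg0, hs0⟩ | ⟨hsne, hineq⟩
    · simp [hms, hαk_eq hs0, hg0]
    · have hS : (0:ℝ) < ‖s‖ := norm_pos_iff.mpr hsne
      have hGnn : (0:ℝ) ≤ ‖gradient f x‖ := norm_nonneg _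
      have hb2 : (δ * ‖s‖ * ‖gradient f x‖) ^ 2 ≤ ⟪gradient f x, s⟫ ^ 2 := by
        nlinarith [mul_nonneg (mul_nonneg hδ.1.le hS.le) hGnn]
      rw [hms, hαk_ne hsne]
      have heq : -(-⟪gradient f x, s⟫ / (Lk * ‖s‖ ^ 2)) * ⟪gradient f x, s⟫ -
          1/2 * Lk * (-⟪gradient f x, s⟫ / (Lk * ‖s‖ ^ 2)) ^ 2 * ‖s‖ ^ 2
          = ⟪gradient f x, s⟫ ^ 2 / (2 * Lk * ‖s‖ ^ 2) := by
        field_simp; ring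
      rw [heq, div_mul_eq_mul_div, div_le_div_iff₀ (by positivity) (by positivity)]
      nlinarith [hb2, sq_nonneg ⟪gradient f x, s⟫]
  · -- negative curvature part
    rcases hd with ⟨hl0, hd0⟩ | ⟨hdne, hc1, hc2, hbneg⟩
    · simp [hmd, hβk_eq hd0, min_eq_left hl0]
    · have hdpos : (0:ℝ) < ‖d‖ := norm_pos_iff.mpr hdne
      have hlneg : lam x < 0 := by
        by_contra h
        push_neg at h
        nlinarith [mul_nonneg (mul_nonneg hγ.1.le h) (sq_nonneg ‖d‖)]
      set c : ℝ := ⟪d, H x d⟫ with hc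
      set b : ℝ := ⟪gradient f x, d⟫ with hb
      have hcneg : c < 0 := lt_of_le_of_lt hc1 hc2
      set A : ℝ := σk * ‖d‖ ^ 3 with hA
      have hApos : 0 < A := by rw [hA]; positivity
      set D : ℝ := c ^ 2 - 2 * σk * ‖d‖ ^ 3 * b with hD
      clear_value c b A D
      have hDge : c ^ 2 ≤ D := by
        rw [hD]
        nlinarith [mul_nonneg (mul_nonneg hσk.le (pow_pos hdpos 3).le)
          (neg_nonneg.mpr hbneg)]
      have hDnn : 0 ≤ D := le_trans (sq_nonneg c) hDge
      have hsqrt : -c ≤ Real.sqrt D := by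
        calc -c = |c| := (abs_of_neg hcneg).symm
        _ = Real.sqrt (c ^ 2) := (Real.sqrt_sq_eq_abs c).symm
        _ ≤ Real.sqrt D := Real.sqrt_le_sqrt hDge
      have h1 : A * βk = -c + Real.sqrt D := by
        rw [hβk_ne hdne]; field_simp [hApos.ne']
      have h2 : Real.sqrt D ^ 2 = D := Real.sq_sqrt hDnn
      have hsq : (A * βk + c) ^ 2 = D := by
        have h5 : A * βk + c = Real.sqrt D := by rw [h1]; ring
        rw [h5]; exact h2
      have hroot : A * βk ^ 2 + 2 * c * βk + 2 * b = 0 := by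
        have h3 : A * (A * βk ^ 2 + 2 * c * βk + 2 * b) = 0 := by
          rw [hD] at hsq; rw [hA] at hsq ⊢; linear_combination hsq
        exact (mul_eq_zero.mp h3).resolve_left (ne_of_gt hApos)
      have hβlb' : -2 * c ≤ A * βk := by rw [h1]; linarith
      have hβpos : 0 < βk := by
        by_contra h
        push_neg at h
        nlinarith [mul_nonpos_of_nonneg_of_nonpos hApos.le h]
      have hmdval : md βk = A / 3 * βk ^ 3 + c / 2 * βk ^ 2 := by
        have hroot' := hroot
        rw [hA] at hroot'
        rw [hmd, hA]
        linear_combination (-(βk)/2) * hroot'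
      have hstep1 : 2 * (-c) ^ 3 / (3 * A ^ 2) ≤ md βk := by
        rw [hmdval]; exact aux_cubic A βk c hApos hcneg hβlb'
      refine le_trans ?_ hstep1
      rw [min_eq_right hlneg.le, abs_of_neg hlneg, hA]
      exact aux_compare γ (-lam x) ‖d‖ c σk hγ.1 (by linarith) hdpos hσk
        (by nlinarith)
end

section
/- (Convergence of the dynamic method.) Suppose f is bounded below by f_inf ∈ ℝ. Fix δ, γ ∈ (0,1] and L_max, σ_max > 0, and let (x_k)_{k≥1} be a sequence in E and (L_k), (σ_k) sequences with L_k ∈ (0, L_max] and σ_k ∈ (0, σ_max] for all k, such that for every k, f(x_k) − f(x_{k+1}) ≥ max{ (δ²/(2L_k)) ‖g(x_k)‖², (2γ³/(3σ_k²)) |(λ(x_k))₋|³ }. Then ‖g(x_k)‖ → 0 as k → ∞ and liminf_{k→∞} λ(x_k) ≥ 0. -/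
open scoped RealInnerProductSpace
open Filter

lemma tendsto_of_pow3_aux {a : ℕ → ℝ} (ha : ∀ k, 0 ≤ a k)
    (h : Tendsto (fun k => a k ^ 3) atTop (nhds 0)) : Tendsto a atTop (nhds 0) := by
  rw [Metric.tendsto_atTop] at h ⊢
  intro ε hε
  obtain ⟨N, hN⟩ := h (ε ^ 3) (by positivity)
  refine ⟨N, fun k hk => ?_⟩
  have h1 := hN k hk
  rw [Real.dist_eq, sub_zero, abs_of_nonneg (pow_nonneg (ha k) 3)] at h1
  rw [Real.dist_eq, sub_zero, abs_of_nonneg (ha k)]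
  exact lt_of_pow_lt_pow_left₀ 3 hε.le h1

/-- convergence of the dynamic method. -/
theorem dynamic_method_convergence
    (n : ℕ) (hn : 1 ≤ n)
    (f : EuclideanSpace ℝ (Fin n) → ℝ) (hf : ContDiff ℝ 2 f)
    (f_inf : ℝ) (hfbdd : ∀ y, f_inf ≤ f y)
    (H : EuclideanSpace ℝ (Fin n) → EuclideanSpace ℝ (Fin n) →L[ℝ] EuclideanSpace ℝ (Fin n))
    (hH : ∀ y, HasFDerivAt (gradient f) (H y) y)
    (hHsym : ∀ y u v, ⟪H y u, v⟫ = ⟪u, H y v⟫)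
    (lam : EuclideanSpace ℝ (Fin n) → ℝ)
    (hlam : ∀ y, lam y =
      sInf {r : ℝ | ∃ u : EuclideanSpace ℝ (Fin n), ‖u‖ = 1 ∧ r = ⟪u, H y u⟫})
    (δ γ : ℝ) (hδ : δ ∈ Set.Ioc (0 : ℝ) 1) (hγ : γ ∈ Set.Ioc (0 : ℝ) 1)
    (Lmax σmax : ℝ) (hLmax : 0 < Lmax) (hσmax : 0 < σmax)
    (x : ℕ → EuclideanSpace ℝ (Fin n)) (L σ : ℕ → ℝ)
    (hL : ∀ k, L k ∈ Set.Ioc (0 : ℝ) Lmax)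
    (hσ : ∀ k, σ k ∈ Set.Ioc (0 : ℝ) σmax)
    (hdec : ∀ k, f (x k) - f (x (k + 1)) ≥
      max (δ ^ 2 / (2 * L k) * ‖gradient f (x k)‖ ^ 2)
        (2 * γ ^ 3 / (3 * (σ k) ^ 2) * |min 0 (lam (x k))| ^ 3)) :
    Tendsto (fun k => ‖gradient f (x k)‖) atTop (nhds 0) ∧
    (0 : EReal) ≤ liminf (fun k => (lam (x k) : EReal)) atTop := by
  obtain ⟨hδ0, hδ1⟩ := hδ
  obtain ⟨hγ0, hγ1⟩ := hγ
  set a : ℕ → ℝ := fun k => ‖gradient f (x k)‖ with ha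
  set m : ℕ → ℝ := fun k => |min 0 (lam (x k))| with hm
  set d : ℕ → ℝ := fun k => f (x k) - f (x (k + 1)) with hd
  -- nonnegativity of decrements
  have hd0 : ∀ k, 0 ≤ d k := fun k =>
    le_trans (le_trans (mul_nonneg (div_nonneg (by positivity)
      (by linarith [(hL k).1])) (by positivity)) (le_max_left _ _)) (hdec k)
  -- f (x k) converges
  have hanti : Antitone (fun k => f (x k)) :=
    antitone_nat_of_succ_le fun k => by have := hd0 k; simp only [hd] at this; linarith
  have hbdd : BddBelow (Set.range fun k => f (x k)) :=
    ⟨f_inf, fun y ⟨k, hk⟩ => hk ▸ hfbdd (x k)⟩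
  have hconv := tendsto_atTop_ciInf hanti hbdd
  have hdiff : Tendsto d atTop (nhds 0) := by
    have h2 : Tendsto (fun k => f (x (k + 1))) atTop (nhds (⨅ k, f (x k))) :=
      hconv.comp (tendsto_add_atTop_nat 1)
    have := hconv.sub h2
    rwa [sub_self] at this
  -- gradient part
  have hasq : Tendsto (fun k => a k ^ 2) atTop (nhds 0) := by
    have hC : Tendsto (fun k => 2 * Lmax / δ ^ 2 * d k) atTop (nhds 0) := by
      have := hdiff.const_mul (2 * Lmax / δ ^ 2)
      simpa using this
    refine squeeze_zero (fun k => by positivity) (fun k => ?_) hC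
    have hA : δ ^ 2 / (2 * L k) * a k ^ 2 ≤ d k :=
      le_trans (le_max_left _ _) (hdec k)
    have hdl : δ ^ 2 / (2 * Lmax) ≤ δ ^ 2 / (2 * L k) := by
      have h1 := (hL k).1
      gcongr
      exact (hL k).2
    have key : δ ^ 2 / (2 * Lmax) * a k ^ 2 ≤ d k :=
      le_trans (mul_le_mul_of_nonneg_right hdl (by positivity)) hA
    rw [div_mul_eq_mul_div, div_le_iff₀ (show (0:ℝ) < 2 * Lmax by positivity)] at key
    rw [div_mul_eq_mul_div, le_div_iff₀ (show (0:ℝ) < δ ^ 2 by positivity)]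
    nlinarith [key]
  have hga : Tendsto a atTop (nhds 0) := by
    have := (Real.continuous_sqrt.tendsto 0).comp hasq
    simp only [Function.comp_def] at this
    rw [Real.sqrt_zero] at this
    have heq : (fun k => Real.sqrt (a k ^ 2)) = a := by
      funext k; exact Real.sqrt_sq (norm_nonneg _)
    rwa [heq] at this
  refine ⟨hga, ?_⟩
  -- eigenvalue part
  have hmcube : Tendsto (fun k => m k ^ 3) atTop (nhds 0) := by
    have hC : Tendsto (fun k => 3 * σmax ^ 2 / (2 * γ ^ 3) * d k) atTop (nhds 0) := by
      have := hdiff.const_mul (3 * σmax ^ 2 / (2 * γ ^ 3))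
      simpa using this
    refine squeeze_zero (fun k => by positivity) (fun k => ?_) hC
    have hA : 2 * γ ^ 3 / (3 * σ k ^ 2) * m k ^ 3 ≤ d k :=
      le_trans (le_max_right _ _) (hdec k)
    have hsk := hσ k
    have hdl : 2 * γ ^ 3 / (3 * σmax ^ 2) ≤ 2 * γ ^ 3 / (3 * σ k ^ 2) := by
      have h1 := hsk.1
      gcongr
      exact hsk.2
    have key : 2 * γ ^ 3 / (3 * σmax ^ 2) * m k ^ 3 ≤ d k :=
      le_trans (mul_le_mul_of_nonneg_right hdl (by positivity)) hA
    rw [div_mul_eq_mul_div, div_le_iff₀ (show (0:ℝ) < 3 * σmax ^ 2 by positivity)] at key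
    rw [div_mul_eq_mul_div, le_div_iff₀ (show (0:ℝ) < 2 * γ ^ 3 by positivity)]
    nlinarith [key]
  have hmt : Tendsto m atTop (nhds 0) :=
    tendsto_of_pow3_aux (fun k => abs_nonneg _) hmcube
  have hmin : Tendsto (fun k => min 0 (lam (x k))) atTop (nhds 0) := by
    have heq : (fun k => min 0 (lam (x k))) = fun k => -(m k) := by
      funext k
      simp only [hm, abs_of_nonpos (min_le_left 0 (lam (x k))), neg_neg]
    rw [heq]
    simpa using hmt.neg
  have hcoe : Tendsto (fun k => ((min 0 (lam (x k)) : ℝ) : EReal)) atTop (nhds (0 : EReal)) := by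
    rw [← EReal.coe_zero]
    exact EReal.tendsto_coe.mpr hmin
  have hlim := hcoe.liminf_eq
  calc (0 : EReal) = liminf (fun k => ((min 0 (lam (x k)) : ℝ) : EReal)) atTop := hlim.symm
    _ ≤ liminf (fun k => (lam (x k) : EReal)) atTop :=
        liminf_le_liminf (Eventually.of_forall fun k =>
          EReal.coe_le_coe_iff.mpr (min_le_right _ _))
end

section
/- (Iteration complexity of the dynamic method.) Suppose f is bounded below by f_inf ∈ ℝ. Fix δ, γ ∈ (0,1] and L_max, σ_max > 0, and let (x_k)_{k≥1} be a sequence in E and (L_k), (σ_k) sequences with L_k ∈ (0, L_max] and σ_k ∈ (0, σ_max] for all k, such that for every k, f(x_k) − f(x_{k+1}) ≥ max{ (δ²/(2L_k)) ‖g(x_k)‖², (2γ³/(3σ_k²)) |(λ(x_k))₋|³ }. Then for every ε_g > 0 the set G(ε_g) := { k ≥ 1 : ‖g(x_k)‖ > ε_g } is finite with cardinality at most (2 L_max (f(x_1) − f_inf)/δ²) · ε_g^{−2}, and for every ε_H > 0 the set H(ε_H) := { k ≥ 1 : |(λ(x_k))₋| > ε_H } is finite with cardinality at most (3 σ_max²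 (f(x_1) − f_inf)/(2γ³)) · ε_H^{−3}. -/
open scoped RealInnerProductSpace

lemma aux_count (φ : ℕ → ℝ) (B : ℝ) (hB : ∀ k, B ≤ φ k)
    (hmono : ∀ k, 0 ≤ φ k - φ (k + 1)) (c : ℝ) (hc : 0 < c)
    (S : Set ℕ) (hS : ∀ k ∈ S, c ≤ φ k - φ (k + 1)) :
    S.Finite ∧ (S.ncard : ℝ) ≤ (φ 0 - B) / c := by
  classical
  have key : ∀ t : Finset ℕ, ↑t ⊆ S → (t.card : ℝ) * c ≤ φ 0 - B := by
    intro t ht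
    have hN : ∀ k ∈ t, k < t.sup id + 1 := fun k hk =>
      Nat.lt_succ_of_le (Finset.le_sup (f := id) hk)
    have hsub : t ⊆ Finset.range (t.sup id + 1) := fun k hk =>
      Finset.mem_range.2 (hN k hk)
    calc (t.card : ℝ) * c = ∑ _k ∈ t, c := by rw [Finset.sum_const, nsmul_eq_mul]
      _ ≤ ∑ k ∈ t, (φ k - φ (k + 1)) :=
          Finset.sum_le_sum (fun k hk => hS k (ht hk))
      _ ≤ ∑ k ∈ Finset.range (t.sup id + 1), (φ k - φ (k + 1)) :=
          Finset.sum_le_sum_of_subset_of_nonneg hsub (fun k _ _ => hmono k)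
      _ = φ 0 - φ (t.sup id + 1) := Finset.sum_range_sub' φ _
      _ ≤ φ 0 - B := by linarith [hB (t.sup id + 1)]
  have hfin : S.Finite := by
    by_contra h
    obtain ⟨t, hts, htcard⟩ :=
      Set.Infinite.exists_subset_card_eq h (⌈(φ 0 - B) / c⌉₊ + 1)
    have h1 := key t hts
    have h2 : (t.card : ℝ) ≤ (φ 0 - B) / c := (le_div_iff₀ hc).2 h1
    rw [htcard] at h2
    have h3 : ((⌈(φ 0 - B) / c⌉₊ : ℝ) + 1) ≤ (φ 0 - B) / c := by push_cast at h2 ⊢; linarith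
    have h4 : (φ 0 - B) / c ≤ (⌈(φ 0 - B) / c⌉₊ : ℝ) := Nat.le_ceil _
    linarith
  refine ⟨hfin, ?_⟩
  have h := key hfin.toFinset (by simp)
  rw [Set.ncard_eq_toFinset_card S hfin]
  exact (le_div_iff₀ hc).2 h

/-- iteration complexity of the dynamic method.
Here `x 0` plays the role of the first iterate `x₁`. -/
theorem dynamic_method_iteration_complexity
    (n : ℕ) (hn : 1 ≤ n)
    (f : EuclideanSpace ℝ (Fin n) → ℝ) (hf : ContDiff ℝ 2 f)
    (f_inf : ℝ) (hfbdd : ∀ y, f_inf ≤ f y)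
    (H : EuclideanSpace ℝ (Fin n) → EuclideanSpace ℝ (Fin n) →L[ℝ] EuclideanSpace ℝ (Fin n))
    (hH : ∀ y, HasFDerivAt (gradient f) (H y) y)
    (hHsym : ∀ y u v, ⟪H y u, v⟫ = ⟪u, H y v⟫)
    (lam : EuclideanSpace ℝ (Fin n) → ℝ)
    (hlam : ∀ y, lam y =
      sInf {r : ℝ | ∃ u : EuclideanSpace ℝ (Fin n), ‖u‖ = 1 ∧ r = ⟪u, H y u⟫})
    (δ γ : ℝ) (hδ : δ ∈ Set.Ioc (0 : ℝ) 1) (hγ : γ ∈ Set.Ioc (0 : ℝ) 1)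
    (Lmax σmax : ℝ) (hLmax : 0 < Lmax) (hσmax : 0 < σmax)
    (x : ℕ → EuclideanSpace ℝ (Fin n)) (L σ : ℕ → ℝ)
    (hL : ∀ k, L k ∈ Set.Ioc (0 : ℝ) Lmax)
    (hσ : ∀ k, σ k ∈ Set.Ioc (0 : ℝ) σmax)
    (hdec : ∀ k, f (x k) - f (x (k + 1)) ≥
      max (δ ^ 2 / (2 * L k) * ‖gradient f (x k)‖ ^ 2)
        (2 * γ ^ 3 / (3 * (σ k) ^ 2) * |min 0 (lam (x k))| ^ 3)) :
    (∀ εg : ℝ, 0 < εg →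
      {k : ℕ | ‖gradient f (x k)‖ > εg}.Finite ∧
      ({k : ℕ | ‖gradient f (x k)‖ > εg}.ncard : ℝ) ≤
        2 * Lmax * (f (x 0) - f_inf) / δ ^ 2 / εg ^ 2) ∧
    (∀ εH : ℝ, 0 < εH →
      {k : ℕ | |min 0 (lam (x k))| > εH}.Finite ∧
      ({k : ℕ | |min 0 (lam (x k))| > εH}.ncard : ℝ) ≤
        3 * σmax ^ 2 * (f (x 0) - f_inf) / (2 * γ ^ 3) / εH ^ 3) := by
  obtain ⟨hδ0, hδ1⟩ := hδ
  obtain ⟨hγ0, hγ1⟩ := hγ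
  have hmono : ∀ k, 0 ≤ f (x k) - f (x (k + 1)) := by
    intro k
    have h1 := hdec k
    have h2 : (0 : ℝ) ≤ δ ^ 2 / (2 * L k) * ‖gradient f (x k)‖ ^ 2 := by
      have := (hL k).1; positivity
    exact le_trans (le_trans h2 (le_max_left _ _)) h1
  have hB : ∀ k, f_inf ≤ f (x k) := fun k => hfbdd (x k)
  constructor
  · intro εg hεg
    set c := δ ^ 2 / (2 * Lmax) * εg ^ 2 with hcdef
    have hc : 0 < c := by positivity
    have hS : ∀ k ∈ {k : ℕ | ‖gradient f (x k)‖ > εg}, c ≤ f (x k) - f (x (k + 1)) := by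
      intro k hk
      have hk' : εg < ‖gradient f (x k)‖ := hk
      have hLk := hL k
      have hle : c ≤ δ ^ 2 / (2 * L k) * ‖gradient f (x k)‖ ^ 2 := by
        rw [hcdef]
        have h2Lk : 0 < 2 * L k := by linarith [hLk.1]
        have hnn : 0 ≤ δ ^ 2 / (2 * L k) := le_of_lt (div_pos (by positivity) h2Lk)
        gcongr <;> first
          | exact hnn | exact h2Lk | exact hLk.2 | exact hk'.le | exact hεg.le | positivity
      exact le_trans hle (le_trans (le_max_left _ _) (hdec k))
    obtain ⟨hfin, hcard⟩ := aux_count (fun k => f (x k)) f_inf hB hmono c hc _ hS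
    refine ⟨hfin, hcard.trans ?_⟩
    rw [hcdef]
    have heq : (f (x 0) - f_inf) / (δ ^ 2 / (2 * Lmax) * εg ^ 2) =
        2 * Lmax * (f (x 0) - f_inf) / δ ^ 2 / εg ^ 2 := by
      field_simp
    exact heq.le
  · intro εH hεH
    set c := 2 * γ ^ 3 / (3 * σmax ^ 2) * εH ^ 3 with hcdef
    have hc : 0 < c := by positivity
    have hS : ∀ k ∈ {k : ℕ | |min 0 (lam (x k))| > εH}, c ≤ f (x k) - f (x (k + 1)) := by
      intro k hk
      have hk' : εH < |min 0 (lam (x k))| := hk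
      have hσk := hσ k
      have hle : c ≤ 2 * γ ^ 3 / (3 * σ k ^ 2) * |min 0 (lam (x k))| ^ 3 := by
        rw [hcdef]
        have h3σ : 0 < 3 * σ k ^ 2 := by nlinarith [hσk.1]
        have hnn : 0 ≤ 2 * γ ^ 3 / (3 * σ k ^ 2) := le_of_lt (div_pos (by positivity) h3σ)
        gcongr <;> first
          | exact h3σ | exact hnn
          | exact pow_le_pow_left₀ hσk.1.le hσk.2 2
          | exact hσk.1.le | exact hσk.2
          | exact hεH.le | exact hk'.le | positivity
      exact le_trans hle (le_trans (le_max_right _ _) (hdec k))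
    obtain ⟨hfin, hcard⟩ := aux_count (fun k => f (x k)) f_inf hB hmono c hc _ hS
    refine ⟨hfin, hcard.trans ?_⟩
    rw [hcdef]
    have heq : (f (x 0) - f_inf) / (2 * γ ^ 3 / (3 * σmax ^ 2) * εH ^ 3) =
        3 * σmax ^ 2 * (f (x 0) - f_inf) / (2 * γ ^ 3) / εH ^ 3 := by
      field_simp
    exact heq.le
end

section
/- (One-step expected decrease with curvature noise.) Let f : E → ℝ be differentiable with gradient ∇f Lipschitz continuous with constant L > 0, and fix x ∈ E. Let (Ω, 𝔉, P) be a probability space and let s, d : Ω → E and ω : Ω → ℝ be measurable maps such that: ω has the uniform distribution on [−1, 1] and is independent of the pair (s, d); s and d are square-integrable; −⟪∇f(x), 𝔼[s]⟫ ≥ δ ‖∇f(x)‖² for some δ ∈ (0,1]; 𝔼[‖s‖²] ≤ M_{s1} + M_{s2} ‖∇f(x)‖²; and 𝔼[‖d‖²] ≤ M_{d1} + M_{d2} ‖∇f(x)‖², where M_{s1}, M_{d1} > 0 and M_{s2}, M_{d2} > 1. Then for any stepsizes α > 0 and β > 0, 𝔼[f(x + α s + β ω d)] − f(x) ≤ −(δα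 − (1/2) L M_{s2} α² − (1/6) L M_{d2} β²) ‖∇f(x)‖² + (1/2) L M_{s1} α² + (1/6) L M_{d1} β². -/
open scoped RealInnerProductSpace ENNReal
open MeasureTheory ProbabilityTheory

lemma descent_abs {n : ℕ} (f : EuclideanSpace ℝ (Fin n) → ℝ) (hf : Differentiable ℝ f)
    (L : ℝ) (hL : 0 ≤ L)
    (hgLip : ∀ y z, ‖gradient f y - gradient f z‖ ≤ L * ‖y - z‖)
    (x u : EuclideanSpace ℝ (Fin n)) :
    |f (x + u) - f x - ⟪gradient f x, u⟫| ≤ L / 2 * ‖u‖ ^ 2 := by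
  have hgc : Continuous (gradient f) :=
    (LipschitzWith.of_dist_le_mul (K := ⟨L, hL⟩)
      (fun y z => by rw [dist_eq_norm, dist_eq_norm]; exact hgLip y z)).continuous
  have key : ∀ t : ℝ, HasDerivAt (fun t : ℝ => f (x + t • u))
      ⟪gradient f (x + t • u), u⟫ t := by
    intro t
    have h1 : HasDerivAt (fun t : ℝ => x + t • u) u t := by
      simpa using ((hasDerivAt_id t).smul_const u).const_add x
    have h2 := (hf (x + t • u)).hasGradientAt.hasFDerivAt
    simpa [InnerProductSpace.toDual_apply_apply, Function.comp_def] using h2.comp_hasDerivAt t h1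
  have hcont : Continuous (fun t : ℝ => ⟪gradient f (x + t • u), u⟫) := by
    exact (hgc.comp (continuous_const.add (continuous_id.smul continuous_const))).inner continuous_const
  have hFTC : (∫ t in (0:ℝ)..1, ⟪gradient f (x + t • u), u⟫) = f (x + u) - f x := by
    have h := intervalIntegral.integral_eq_sub_of_hasDerivAt
      (f := fun t : ℝ => f (x + t • u)) (fun t _ => key t) (hcont.intervalIntegrable 0 1)
    simpa using h
  have heq : f (x + u) - f x - ⟪gradient f x, u⟫
      = ∫ t in (0:ℝ)..1, ⟪gradient f (x + t • u) - gradient f x, u⟫ := by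
    rw [show (fun t : ℝ => ⟪gradient f (x + t • u) - gradient f x, u⟫)
        = fun t : ℝ => ⟪gradient f (x + t • u), u⟫ - ⟪gradient f x, u⟫ by
      funext t; rw [inner_sub_left]]
    rw [intervalIntegral.integral_sub (hcont.intervalIntegrable 0 1)
      (intervalIntegrable_const), hFTC]
    simp
  rw [heq]
  have hbound : ∀ t ∈ Set.Icc (0:ℝ) 1,
      |⟪gradient f (x + t • u) - gradient f x, u⟫| ≤ L * ‖u‖ ^ 2 * t := by
    intro t ht
    calc |⟪gradient f (x + t • u) - gradient f x, u⟫|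
        ≤ ‖gradient f (x + t • u) - gradient f x‖ * ‖u‖ := abs_real_inner_le_norm _ _
      _ ≤ (L * ‖x + t • u - x‖) * ‖u‖ := by
          gcongr; exact hgLip _ _
      _ = L * ‖u‖ ^ 2 * t := by
          rw [show x + t • u - x = t • u by abel, norm_smul]
          simp [abs_of_nonneg ht.1]; ring
  have habs : |∫ t in (0:ℝ)..1, ⟪gradient f (x + t • u) - gradient f x, u⟫|
      ≤ ∫ t in (0:ℝ)..1, L * ‖u‖ ^ 2 * t := by
    have h1 : IntervalIntegrable
        (fun t : ℝ => ⟪gradient f (x + t • u) - gradient f x, u⟫) volume 0 1 :=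
      ((hgc.comp (continuous_const.add (continuous_id.smul continuous_const))).sub continuous_const).inner continuous_const
        |>.intervalIntegrable 0 1
    calc |∫ t in (0:ℝ)..1, ⟪gradient f (x + t • u) - gradient f x, u⟫|
        ≤ ∫ t in (0:ℝ)..1, |⟪gradient f (x + t • u) - gradient f x, u⟫| :=
          intervalIntegral.abs_integral_le_integral_abs zero_le_one
      _ ≤ ∫ t in (0:ℝ)..1, L * ‖u‖ ^ 2 * t := by
          apply intervalIntegral.integral_mono_on zero_le_one h1.abs
            ((continuous_const.mul continuous_id).intervalIntegrable 0 1)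
          exact hbound
  refine habs.trans_eq ?_
  rw [intervalIntegral.integral_const_mul, integral_id]
  norm_num; ring

set_option maxHeartbeats 1000000 in
/-- one-step expected decrease with curvature noise. -/
theorem one_step_expected_decrease_curvature_noise
    (n : ℕ) (hn : 1 ≤ n)
    (f : EuclideanSpace ℝ (Fin n) → ℝ) (hf : Differentiable ℝ f)
    (L : ℝ) (hL : 0 < L)
    (hgLip : ∀ y z, ‖gradient f y - gradient f z‖ ≤ L * ‖y - z‖)
    (x : EuclideanSpace ℝ (Fin n))
    (Ω : Type) [MeasurableSpace Ω] (P : Measure Ω) [IsProbabilityMeasure P]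
    (s d : Ω → EuclideanSpace ℝ (Fin n)) (ω : Ω → ℝ)
    (hs_meas : Measurable s) (hd_meas : Measurable d) (hω_meas : Measurable ω)
    (hω_unif : P.map ω = (2 : ℝ≥0∞)⁻¹ • (volume.restrict (Set.Icc (-1 : ℝ) 1)))
    (hω_indep : IndepFun ω (fun a => (s a, d a)) P)
    (hs_L2 : MemLp s 2 P) (hd_L2 : MemLp d 2 P)
    (δ : ℝ) (hδ : δ ∈ Set.Ioc (0 : ℝ) 1)
    (Ms1 Md1 Ms2 Md2 : ℝ) (hMs1 : 0 < Ms1) (hMd1 : 0 < Md1)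
    (hMs2 : 1 < Ms2) (hMd2 : 1 < Md2)
    (hs_mean : -⟪gradient f x, ∫ a, s a ∂P⟫ ≥ δ * ‖gradient f x‖ ^ 2)
    (hs_2nd : (∫ a, ‖s a‖ ^ 2 ∂P) ≤ Ms1 + Ms2 * ‖gradient f x‖ ^ 2)
    (hd_2nd : (∫ a, ‖d a‖ ^ 2 ∂P) ≤ Md1 + Md2 * ‖gradient f x‖ ^ 2)
    (α β : ℝ) (hα : 0 < α) (hβ : 0 < β) :
    (∫ a, f (x + α • s a + (β * ω a) • d a) ∂P) - f x ≤
      -(δ * α - 1/2 * L * Ms2 * α ^ 2 - 1/6 * L * Md2 * β ^ 2) * ‖gradient f x‖ ^ 2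
        + 1/2 * L * Ms1 * α ^ 2 + 1/6 * L * Md1 * β ^ 2 := by
  set g := gradient f x with hg
  set u : Ω → EuclideanSpace ℝ (Fin n) := fun a => α • s a + (β * ω a) • d a with hu
  -- ω is a.e. in [-1,1]
  have hω_ae : ∀ᵐ a ∂P, ω a ∈ Set.Icc (-1 : ℝ) 1 := by
    have h0 : ∀ᵐ y ∂(P.map ω), y ∈ Set.Icc (-1 : ℝ) 1 := by
      rw [hω_unif]
      exact Measure.ae_smul_measure (ae_restrict_mem measurableSet_Icc) _
    exact (MeasureTheory.ae_map_iff hω_meas.aemeasurable measurableSet_Icc).mp h0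
  have hω_abs : ∀ᵐ a ∂P, |ω a| ≤ 1 := by
    filter_upwards [hω_ae] with a ha using abs_le.mpr ⟨ha.1, ha.2⟩
  -- moments of ω
  have hωm1 : ∫ a, ω a ∂P = 0 := by
    have h1 : ∫ a, ω a ∂P = ∫ y, y ∂(P.map ω) :=
      (integral_map (f := fun y : ℝ => y) hω_meas.aemeasurable
        aestronglyMeasurable_id).symm
    rw [h1, hω_unif, integral_smul_measure, MeasureTheory.integral_Icc_eq_integral_Ioc,
      ← intervalIntegral.integral_of_le (by norm_num : (-1:ℝ) ≤ 1)]
    simp [integral_id]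
  have hωm2 : ∫ a, ω a ^ 2 ∂P = 1 / 3 := by
    have h1 : ∫ a, ω a ^ 2 ∂P = ∫ y, y ^ 2 ∂(P.map ω) :=
      (integral_map (f := fun y : ℝ => y ^ 2) hω_meas.aemeasurable
        (measurable_id.pow_const 2).aestronglyMeasurable).symm
    rw [h1, hω_unif, integral_smul_measure, MeasureTheory.integral_Icc_eq_integral_Ioc,
      ← intervalIntegral.integral_of_le (by norm_num : (-1:ℝ) ≤ 1)]
    rw [integral_pow, ENNReal.toReal_inv]
    norm_num
  -- integrability
  have hω_int : Integrable ω P :=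
    (integrable_const (1:ℝ)).mono' hω_meas.aestronglyMeasurable
      (by filter_upwards [hω_abs] with a ha using by simpa using ha)
  have hω2_int : Integrable (fun a => ω a ^ 2) P := by
    refine (integrable_const (1:ℝ)).mono' ((hω_meas.pow_const 2).aestronglyMeasurable) ?_
    filter_upwards [hω_abs] with a ha
    rw [Real.norm_eq_abs, abs_pow]
    nlinarith [abs_nonneg (ω a)]
  have hs_int : Integrable s P := hs_L2.integrable one_le_two
  have hd_int : Integrable d P := hd_L2.integrable one_le_two
  have hs_sq_int : Integrable (fun a => ‖s a‖ ^ 2) P := hs_L2.norm.integrable_sq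
  have hd_sq_int : Integrable (fun a => ‖d a‖ ^ 2) P := hd_L2.norm.integrable_sq
  have hsd_int : Integrable (fun a => ⟪s a, d a⟫) P := by
    refine ((hs_sq_int.add hd_sq_int).div_const 2).mono'
      ((hs_meas.inner hd_meas).aestronglyMeasurable) ?_
    filter_upwards with a
    simp only [Pi.add_apply, Real.norm_eq_abs]
    have h1 := abs_real_inner_le_norm (s a) (d a)
    nlinarith [norm_nonneg (s a), norm_nonneg (d a), sq_nonneg (‖s a‖ - ‖d a‖)]
  -- independence consequences
  have hind_gd : IndepFun ω (fun a => ⟪g, d a⟫) P :=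
    hω_indep.comp measurable_id (measurable_const.inner measurable_snd)
  have hind_sd : IndepFun ω (fun a => ⟪s a, d a⟫) P :=
    hω_indep.comp measurable_id (measurable_fst.inner measurable_snd)
  have hind_d2 : IndepFun (fun a => ω a ^ 2) (fun a => ‖d a‖ ^ 2) P :=
    hω_indep.comp (measurable_id.pow_const 2) (measurable_snd.norm.pow_const 2)
  have hEgd : (∫ a, ω a * ⟪g, d a⟫ ∂P) = 0 := by
    have h := hind_gd.integral_mul_eq_mul_integral hω_meas.aestronglyMeasurable
      ((measurable_const.inner hd_meas).aestronglyMeasurable)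
    rw [show (∫ a, ω a * ⟪g, d a⟫ ∂P)
        = integral P (ω * fun a => ⟪g, d a⟫) from rfl, h, hωm1, zero_mul]
  have hEsd : (∫ a, ω a * ⟪s a, d a⟫ ∂P) = 0 := by
    have h := hind_sd.integral_mul_eq_mul_integral hω_meas.aestronglyMeasurable
      ((hs_meas.inner hd_meas).aestronglyMeasurable)
    rw [show (∫ a, ω a * ⟪s a, d a⟫ ∂P)
        = integral P (ω * fun a => ⟪s a, d a⟫) from rfl, h, hωm1, zero_mul]
  have hEd2 : (∫ a, ω a ^ 2 * ‖d a‖ ^ 2 ∂P) = 1 / 3 * ∫ a, ‖d a‖ ^ 2 ∂P := by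
    have h := hind_d2.integral_mul_eq_mul_integral ((hω_meas.pow_const 2).aestronglyMeasurable)
      ((hd_meas.norm.pow_const 2).aestronglyMeasurable)
    rw [show (∫ a, ω a ^ 2 * ‖d a‖ ^ 2 ∂P)
        = integral P ((fun a => ω a ^ 2) * fun a => ‖d a‖ ^ 2) from rfl, h, hωm2]
  -- u is L2
  have hu_meas : Measurable u :=
    (hs_meas.const_smul α).add ((measurable_const.mul hω_meas).smul hd_meas)
  have hβω_L2 : MemLp (fun a => (β * ω a) • d a) 2 P := by
    refine (hd_L2.const_smul β).mono
      (((measurable_const.mul hω_meas).smul hd_meas).aestronglyMeasurable) ?_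
    filter_upwards [hω_abs] with a ha
    simp only [Pi.smul_apply]
    rw [norm_smul, norm_smul]
    simp only [Real.norm_eq_abs, abs_mul, abs_of_pos hβ]
    have h2 : β * |ω a| ≤ β * 1 := mul_le_mul_of_nonneg_left ha hβ.le
    nlinarith [norm_nonneg (d a)]
  have hu_L2 : MemLp u 2 P := (hs_L2.const_smul α).add hβω_L2
  have hu_int : Integrable u P := hu_L2.integrable one_le_two
  have hu_sq_int : Integrable (fun a => ‖u a‖ ^ 2) P := hu_L2.norm.integrable_sq
  -- pointwise expansions
  have hu_norm : ∀ a, ‖u a‖ ^ 2 = α ^ 2 * ‖s a‖ ^ 2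
      + 2 * (α * β) * (ω a * ⟪s a, d a⟫) + β ^ 2 * (ω a ^ 2 * ‖d a‖ ^ 2) := by
    intro a
    rw [hu]
    simp only
    rw [norm_add_sq_real, norm_smul, norm_smul, real_inner_smul_left, real_inner_smul_right]
    simp only [Real.norm_eq_abs, mul_pow, sq_abs]
    ring
  have hinner : ∀ a, ⟪g, u a⟫ = α * ⟪g, s a⟫ + β * (ω a * ⟪g, d a⟫) := by
    intro a
    rw [hu]
    simp only
    rw [inner_add_right, real_inner_smul_right, real_inner_smul_right]
    ring
  -- integral of the inner term
  have hgs_int : Integrable (fun a => ⟪g, s a⟫) P := hs_int.const_inner g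
  have hgd_int : Integrable (fun a => ⟪g, d a⟫) P := hd_int.const_inner g
  have hωgd_int : Integrable (fun a => ω a * ⟪g, d a⟫) P := by
    simpa [Pi.mul_def] using hind_gd.integrable_mul hω_int hgd_int
  have hωsd_int : Integrable (fun a => ω a * ⟪s a, d a⟫) P := by
    simpa [Pi.mul_def] using hind_sd.integrable_mul hω_int hsd_int
  have hω2d2_int : Integrable (fun a => ω a ^ 2 * ‖d a‖ ^ 2) P := by
    simpa [Pi.mul_def] using hind_d2.integrable_mul hω2_int hd_sq_int
  have hgu_int : Integrable (fun a => ⟪g, u a⟫) P := hu_int.const_inner g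
  have hEinner : (∫ a, ⟪g, u a⟫ ∂P) = α * ⟪g, ∫ a, s a ∂P⟫ := by
    calc (∫ a, ⟪g, u a⟫ ∂P)
        = ∫ a, (α * ⟪g, s a⟫ + β * (ω a * ⟪g, d a⟫)) ∂P := by
          exact integral_congr_ae (Filter.Eventually.of_forall hinner)
      _ = α * (∫ a, ⟪g, s a⟫ ∂P) + β * ∫ a, ω a * ⟪g, d a⟫ ∂P := by
          rw [integral_add (hgs_int.const_mul α) (hωgd_int.const_mul β),
            integral_const_mul, integral_const_mul]
      _ = α * ⟪g, ∫ a, s a ∂P⟫ := by rw [integral_inner hs_int, hEgd]; ring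
  have hEusq : (∫ a, ‖u a‖ ^ 2 ∂P)
      = α ^ 2 * (∫ a, ‖s a‖ ^ 2 ∂P) + β ^ 2 * (1 / 3 * ∫ a, ‖d a‖ ^ 2 ∂P) := by
    calc (∫ a, ‖u a‖ ^ 2 ∂P)
        = ∫ a, (α ^ 2 * ‖s a‖ ^ 2 + 2 * (α * β) * (ω a * ⟪s a, d a⟫)
            + β ^ 2 * (ω a ^ 2 * ‖d a‖ ^ 2)) ∂P :=
          integral_congr_ae (Filter.Eventually.of_forall hu_norm)
      _ = α ^ 2 * (∫ a, ‖s a‖ ^ 2 ∂P) + 2 * (α * β) * (∫ a, ω a * ⟪s a, d a⟫ ∂P)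
            + β ^ 2 * ∫ a, ω a ^ 2 * ‖d a‖ ^ 2 ∂P := by
          have iA : Integrable (fun a => α ^ 2 * ‖s a‖ ^ 2) P := hs_sq_int.const_mul _
          have iB : Integrable (fun a => 2 * (α * β) * (ω a * ⟪s a, d a⟫)) P :=
            hωsd_int.const_mul _
          have iC : Integrable (fun a => β ^ 2 * (ω a ^ 2 * ‖d a‖ ^ 2)) P :=
            hω2d2_int.const_mul _
          have iAB : Integrable (fun a => α ^ 2 * ‖s a‖ ^ 2
              + 2 * (α * β) * (ω a * ⟪s a, d a⟫)) P := iA.add iB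
          rw [integral_add iAB iC, integral_add iA iB, integral_const_mul,
            integral_const_mul, integral_const_mul]
      _ = _ := by rw [hEsd, hEd2]; ring
  -- pointwise descent bounds
  have hptwise : ∀ a, f (x + u a) ≤ f x + ⟪g, u a⟫ + L / 2 * ‖u a‖ ^ 2 := by
    intro a
    have h := (abs_le.mp (descent_abs f hf L hL.le hgLip x (u a))).2
    rw [← hg] at h
    linarith
  have hlow : ∀ a, |f (x + u a)| ≤ |f x| + ‖g‖ * ‖u a‖ + L / 2 * ‖u a‖ ^ 2 := by
    intro a
    have h := abs_le.mp (descent_abs f hf L hL.le hgLip x (u a))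
    rw [← hg] at h
    have h2 := abs_real_inner_le_norm g (u a)
    have h3 : -(‖g‖ * ‖u a‖) ≤ ⟪g, u a⟫ := neg_le_of_abs_le h2
    have h4 : ⟪g, u a⟫ ≤ ‖g‖ * ‖u a‖ := le_of_abs_le h2
    have h5 := le_abs_self (f x)
    have h6 := neg_abs_le (f x)
    exact abs_le.mpr ⟨by linarith [h.1], by linarith [h.2]⟩
  have hf_meas : AEStronglyMeasurable (fun a => f (x + u a)) P :=
    (hf.continuous.measurable.comp (measurable_const.add hu_meas)).aestronglyMeasurable
  have hfu_int : Integrable (fun a => f (x + u a)) P := by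
    refine (((integrable_const |f x|).add (hu_int.norm.const_mul ‖g‖)).add
      (hu_sq_int.const_mul (L / 2))).mono' hf_meas ?_
    filter_upwards with a
    simp only [Pi.add_apply, Real.norm_eq_abs]
    exact hlow a
  -- integrate the descent bound
  have hmain : (∫ a, f (x + u a) ∂P) ≤ f x + α * ⟪g, ∫ a, s a ∂P⟫
      + L / 2 * ∫ a, ‖u a‖ ^ 2 ∂P := by
    have h1 := integral_mono hfu_int
      (((integrable_const (f x)).add hgu_int).add (hu_sq_int.const_mul (L / 2)))
      (fun a => hptwise a)
    simp only [Pi.add_apply] at h1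
    have iA : Integrable (fun _ : Ω => f x) P := integrable_const _
    have iC : Integrable (fun a => L / 2 * ‖u a‖ ^ 2) P := hu_sq_int.const_mul _
    have iAB : Integrable (fun a => f x + ⟪g, u a⟫) P := iA.add hgu_int
    rw [integral_add iAB iC, integral_add iA hgu_int, integral_const,
      integral_const_mul, hEinner] at h1
    simpa using h1
  -- rewrite the goal integrand
  have hgoal_eq : (∫ a, f (x + α • s a + (β * ω a) • d a) ∂P) = ∫ a, f (x + u a) ∂P := by
    refine integral_congr_ae (Filter.Eventually.of_forall fun a => ?_)
    exact congrArg f (add_assoc x (α • s a) ((β * ω a) • d a))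
  rw [hgoal_eq]
  rw [hEusq] at hmain
  -- final arithmetic
  have hG : (0:ℝ) ≤ ‖g‖ ^ 2 := by positivity
  have h1 : α * ⟪g, ∫ a, s a ∂P⟫ ≤ -(δ * α * ‖g‖ ^ 2) := by
    nlinarith [hs_mean, hα.le]
  have h2 : L / 2 * α ^ 2 * (∫ a, ‖s a‖ ^ 2 ∂P)
      ≤ L / 2 * α ^ 2 * (Ms1 + Ms2 * ‖g‖ ^ 2) :=
    mul_le_mul_of_nonneg_left hs_2nd (by positivity)
  have h3 : L / 6 * β ^ 2 * (∫ a, ‖d a‖ ^ 2 ∂P)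
      ≤ L / 6 * β ^ 2 * (Md1 + Md2 * ‖g‖ ^ 2) :=
    mul_le_mul_of_nonneg_left hd_2nd (by positivity)
  linarith [hmain, h1, h2, h3]
end

section
/- (Fixed-stepsize bound for the stochastic two-step method, in total expectation.) Let δ ∈ (0,1], L > 0, M_{s1}, M_{d1} > 0, M_{s2}, M_{d2} > 1, f_inf ∈ ℝ, and let ᾱ satisfy 0 < ᾱ ≤ δ/(2 L max{M_{s2}, M_{d2}}). Let (a_k)_{k≥1} and (b_k)_{k≥1} be real sequences with a_k ≥ f_inf and b_k ≥ 0 for all k, satisfying for all k: a_{k+1} − a_k ≤ −(δᾱ − (1/2) L M_{s2} ᾱ² − (1/6) L M_{d2} ᾱ²) b_k + (1/2) L M_{s1} ᾱ² + (1/6) L M_{d1} ᾱ². Then for every K ≥ 1, (1/K) ∑_{k=1}^K b_k ≤ 2 ᾱ L max{M_{s1}, M_{d1}} / δ + 2 (a_1 − f_inf) / (K δ ᾱ). -/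
/-- fixed-stepsize bound for the stochastic two-step method, in total
expectation.  Here `a k` stands for `𝔼[f(x_{k+1})]` and `b k` for `𝔼[‖∇f(x_{k+1})‖²]`,
i.e. the sequences are indexed from `0` with `a 0 = 𝔼[f(x₁)]`. -/
theorem stochastic_two_step_fixed_stepsize
    (δ : ℝ) (hδ : δ ∈ Set.Ioc (0 : ℝ) 1) (L : ℝ) (hL : 0 < L)
    (Ms1 Md1 : ℝ) (hMs1 : 0 < Ms1) (hMd1 : 0 < Md1)
    (Ms2 Md2 : ℝ) (hMs2 : 1 < Ms2) (hMd2 : 1 < Md2)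
    (f_inf : ℝ)
    (αbar : ℝ) (hαbar_pos : 0 < αbar)
    (hαbar : αbar ≤ δ / (2 * L * max Ms2 Md2))
    (a b : ℕ → ℝ)
    (ha : ∀ k, f_inf ≤ a k) (hb : ∀ k, 0 ≤ b k)
    (hdec : ∀ k, a (k + 1) - a k ≤
      -(δ * αbar - 1/2 * L * Ms2 * αbar ^ 2 - 1/6 * L * Md2 * αbar ^ 2) * b k
        + 1/2 * L * Ms1 * αbar ^ 2 + 1/6 * L * Md1 * αbar ^ 2) :
    ∀ K : ℕ, 1 ≤ K →
      (1 / (K : ℝ)) * ∑ k ∈ Finset.range K, b k ≤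
        2 * αbar * L * max Ms1 Md1 / δ + 2 * (a 0 - f_inf) / ((K : ℝ) * δ * αbar) := by
  obtain ⟨hδ0, hδ1⟩ := hδ
  have hM2pos : (0 : ℝ) < max Ms2 Md2 := lt_trans one_pos (lt_max_of_lt_left hMs2)
  have hα2 : αbar * (2 * L * max Ms2 Md2) ≤ δ := by
    have h := (le_div_iff₀ (by positivity : (0:ℝ) < 2 * L * max Ms2 Md2)).mp hαbar
    linarith
  have hs2 : L * Ms2 * αbar ≤ δ / 2 := by
    have h1 : Ms2 ≤ max Ms2 Md2 := le_max_left _ _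
    nlinarith [hαbar_pos, hL]
  have hd2 : L * Md2 * αbar ≤ δ / 2 := by
    have h1 : Md2 ≤ max Ms2 Md2 := le_max_right _ _
    nlinarith [hαbar_pos, hL]
  obtain ⟨D, hD⟩ : ∃ D : ℝ, D = 1/2 * L * Ms1 * αbar ^ 2 + 1/6 * L * Md1 * αbar ^ 2 :=
    ⟨_, rfl⟩
  obtain ⟨M1, hM1⟩ : ∃ M1 : ℝ, M1 = max Ms1 Md1 := ⟨_, rfl⟩
  have h1 : Ms1 ≤ M1 := hM1 ▸ le_max_left _ _
  have h2 : Md1 ≤ M1 := hM1 ▸ le_max_right _ _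
  have hM1pos : 0 < M1 := lt_of_lt_of_le hMs1 h1
  have hcoeff : ∀ k, (δ * αbar / 2) * b k ≤
      (δ * αbar - 1/2 * L * Ms2 * αbar ^ 2 - 1/6 * L * Md2 * αbar ^ 2) * b k := by
    intro k
    have hbk := hb k
    have : δ * αbar / 2 ≤ δ * αbar - 1/2 * L * Ms2 * αbar ^ 2 - 1/6 * L * Md2 * αbar ^ 2 := by
      nlinarith [hαbar_pos, hδ0]
    exact mul_le_mul_of_nonneg_right this hbk
  have key : ∀ K : ℕ, (δ * αbar / 2) * ∑ k ∈ Finset.range K, b k ≤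
      a 0 - a K + K * D := by
    intro K
    induction K with
    | zero => simp
    | succ n ih =>
      rw [Finset.sum_range_succ, mul_add]
      have hd1 := hdec n
      have hc1 := hcoeff n
      push_cast
      nlinarith [hD]
  intro K hK
  have hKpos : (0 : ℝ) < K := by exact_mod_cast hK
  have hkey := key K
  have haK := ha K
  have hDle : D ≤ L * M1 * αbar ^ 2 := by
    rw [hD]
    nlinarith [mul_le_mul_of_nonneg_left h1 (by positivity : (0:ℝ) ≤ 1/2 * L * αbar ^ 2),
      mul_le_mul_of_nonneg_left h2 (by positivity : (0:ℝ) ≤ 1/6 * L * αbar ^ 2),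
      mul_pos (mul_pos hL hM1pos) (pow_pos hαbar_pos 2)]
  have hmain : (δ * αbar / 2) * ∑ k ∈ Finset.range K, b k ≤
      (a 0 - f_inf) + K * (L * M1 * αbar ^ 2) := by
    have hKD : (K : ℝ) * D ≤ K * (L * M1 * αbar ^ 2) :=
      mul_le_mul_of_nonneg_left hDle (le_of_lt hKpos)
    linarith
  have hX : (∑ k ∈ Finset.range K, b k) ≤
      2 / (δ * αbar) * ((a 0 - f_inf) + K * (L * M1 * αbar ^ 2)) := by
    rw [mul_comm] at hmain
    have h := (le_div_iff₀ (by positivity : (0:ℝ) < δ * αbar / 2)).mpr hmain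
    have heq : ((a 0 - f_inf) + K * (L * M1 * αbar ^ 2)) / (δ * αbar / 2)
        = 2 / (δ * αbar) * ((a 0 - f_inf) + K * (L * M1 * αbar ^ 2)) := by
      field_simp
    linarith [heq ▸ h]
  rw [← hM1]
  calc (1 / (K : ℝ)) * ∑ k ∈ Finset.range K, b k
      ≤ (1 / (K : ℝ)) * (2 / (δ * αbar) * ((a 0 - f_inf) + K * (L * M1 * αbar ^ 2))) :=
        mul_le_mul_of_nonneg_left hX (by positivity)
    _ = 2 * αbar * L * M1 / δ + 2 * (a 0 - f_inf) / ((K : ℝ) * δ * αbar) := by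
        field_simp
        ring
end

section
/- (Diminishing-stepsize result for the stochastic two-step method, in total expectation.) Let δ ∈ (0,1], L > 0, M_{s1}, M_{d1}, M_{s2}, M_{d2} > 0, χ > 0, f_inf ∈ ℝ, and let (α_k)_{k≥1} be positive reals with ∑_{k=1}^∞ α_k = ∞ and ∑_{k=1}^∞ α_k² < ∞. Let (a_k)_{k≥1} and (b_k)_{k≥1} be real sequences with a_k ≥ f_inf and b_k ≥ 0 for all k, satisfying for all k: a_{k+1} − a_k ≤ −(δα_k − (1/2) L M_{s2} α_k² − (1/6) L M_{d2} χ² α_k²) b_k + (1/2) L M_{s1} α_k² + (1/6) L M_{d1} χ² α_k². Then ∑_{k=1}^∞ α_k b_k < ∞; moreover, with A_K := ∑_{k=1}^K α_k one has (1/A_K) ∑_{k=1}^K α_k b_k → 0 as K → ∞, and liminf_{k→∞} b_k = 0. -/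
open Filter

set_option maxHeartbeats 1000000

/-- diminishing-stepsize result for the stochastic two-step method, in
total expectation.  Here `a k` stands for `𝔼[f(x_{k+1})]`, `b k` for
`𝔼[‖∇f(x_{k+1})‖²]`, and `α k` for the stepsize `α_{k+1}`, i.e. the sequences are
indexed from `0`. -/
theorem stochastic_two_step_diminishing_stepsize
    (δ : ℝ) (hδ : δ ∈ Set.Ioc (0 : ℝ) 1) (L : ℝ) (hL : 0 < L)
    (Ms1 Md1 Ms2 Md2 : ℝ) (hMs1 : 0 < Ms1) (hMd1 : 0 < Md1)
    (hMs2 : 0 < Ms2) (hMd2 : 0 < Md2)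
    (χ : ℝ) (hχ : 0 < χ) (f_inf : ℝ)
    (α : ℕ → ℝ) (hα_pos : ∀ k, 0 < α k)
    (hα_div : ¬ Summable α) (hα_sq : Summable (fun k => (α k) ^ 2))
    (a b : ℕ → ℝ)
    (ha : ∀ k, f_inf ≤ a k) (hb : ∀ k, 0 ≤ b k)
    (hdec : ∀ k, a (k + 1) - a k ≤
      -(δ * α k - 1/2 * L * Ms2 * (α k) ^ 2 - 1/6 * L * Md2 * χ ^ 2 * (α k) ^ 2) * b k
        + 1/2 * L * Ms1 * (α k) ^ 2 + 1/6 * L * Md1 * χ ^ 2 * (α k) ^ 2) :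
    Summable (fun k => α k * b k) ∧
    Tendsto (fun K => (∑ k ∈ Finset.range K, α k)⁻¹ * ∑ k ∈ Finset.range K, α k * b k)
      atTop (nhds 0) ∧
    liminf b atTop = 0 := by
  obtain ⟨hδ0, hδ1⟩ := hδ
  set C2 : ℝ := 1/2 * L * Ms2 + 1/6 * L * Md2 * χ ^ 2 with hC2
  set C1 : ℝ := 1/2 * L * Ms1 + 1/6 * L * Md1 * χ ^ 2 with hC1
  have hC2pos : 0 < C2 := by positivity
  have hC1pos : 0 < C1 := by positivity
  -- α → 0
  have hα0 : Tendsto α atTop (nhds 0) := by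
    have h2 : Tendsto (fun k => (α k) ^ 2) atTop (nhds 0) := hα_sq.tendsto_atTop_zero
    have h3 : Tendsto (fun k => Real.sqrt ((α k) ^ 2)) atTop (nhds 0) := by
      have := (Real.continuous_sqrt.tendsto 0).comp h2
      simpa using h2.sqrt
    have : ∀ k, Real.sqrt ((α k) ^ 2) = α k := fun k => Real.sqrt_sq (hα_pos k).le
    simpa [this] using h3
  have hev : ∀ᶠ k in atTop, α k < δ / (2 * C2) :=
    hα0.eventually_lt_const (by positivity)
  obtain ⟨N, hN⟩ := eventually_atTop.mp hev
  -- key inequality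
  have hkey : ∀ k, N ≤ k → δ / 2 * (α k * b k) ≤ a k - a (k + 1) + C1 * (α k) ^ 2 := by
    intro k hk
    have h1 := hdec k
    have h2 : -(δ * α k - C2 * (α k) ^ 2) * b k + C1 * (α k) ^ 2
        = -(δ * α k - 1/2 * L * Ms2 * (α k) ^ 2 - 1/6 * L * Md2 * χ ^ 2 * (α k) ^ 2) * b k
        + 1/2 * L * Ms1 * (α k) ^ 2 + 1/6 * L * Md1 * χ ^ 2 * (α k) ^ 2 := by
      rw [hC2, hC1]; ring
    have h1' : a (k + 1) - a k ≤ -(δ * α k - C2 * (α k) ^ 2) * b k + C1 * (α k) ^ 2 := by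
      rw [h2]; linarith [h1]
    have hα' : α k < δ / 2 / C2 := by rw [div_div]; exact hN k hk
    have hC2α : C2 * α k < δ / 2 := (lt_div_iff₀' hC2pos).mp hα'
    have hcoef : δ / 2 * α k ≤ δ * α k - C2 * (α k) ^ 2 := by
      have key : 0 ≤ α k * (δ / 2 - C2 * α k) :=
        mul_nonneg (hα_pos k).le (by linarith)
      nlinarith [key]
    have hmu : -(δ * α k - C2 * (α k) ^ 2) * b k ≤ -(δ / 2 * α k) * b k := by
      apply mul_le_mul_of_nonneg_right _ (hb k)
      linarith
    have hring : -(δ / 2 * α k) * b k = -(δ / 2 * (α k * b k)) := by ring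
    linarith [h1', hmu, hring]
  -- summability
  have htail_sq : Summable (fun k => (α (k + N)) ^ 2) :=
    (summable_nat_add_iff N).mpr hα_sq
  have hg : Summable (fun k => δ / 2 * (α k * b k)) := by
    rw [← summable_nat_add_iff N]
    apply summable_of_sum_range_le
      (c := a N - f_inf + C1 * ∑' k, (α (k + N)) ^ 2)
    · intro k
      have h1 := hb (k + N); have h2 := (hα_pos (k + N)).le
      positivity
    · intro n
      have hstep : ∀ i ∈ Finset.range n,
          δ / 2 * (α (i + N) * b (i + N)) ≤
            (a (i + N) - a (i + N + 1)) + C1 * (α (i + N)) ^ 2 := by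
        intro i _
        have := hkey (i + N) (Nat.le_add_left N i)
        linarith
      calc ∑ i ∈ Finset.range n, δ / 2 * (α (i + N) * b (i + N))
          ≤ ∑ i ∈ Finset.range n, ((a (i + N) - a (i + N + 1)) + C1 * (α (i + N)) ^ 2) :=
            Finset.sum_le_sum hstep
        _ = (a N - a (n + N)) + C1 * ∑ i ∈ Finset.range n, (α (i + N)) ^ 2 := by
            rw [Finset.sum_add_distrib, ← Finset.mul_sum]
            congr 1
            have tel := Finset.sum_range_sub' (fun i => a (i + N)) n
            simpa [Nat.succ_add] using tel
        _ ≤ a N - f_inf + C1 * ∑' k, (α (k + N)) ^ 2 := by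
            have h1 : f_inf ≤ a (n + N) := ha _
            have h2 : ∑ i ∈ Finset.range n, (α (i + N)) ^ 2 ≤ ∑' k, (α (k + N)) ^ 2 :=
              Summable.sum_le_tsum _ (fun i _ => sq_nonneg _) htail_sq
            have h3 := mul_le_mul_of_nonneg_left h2 hC1pos.le
            linarith
  have hsum : Summable (fun k => α k * b k) :=
    (summable_mul_left_iff (show δ / 2 ≠ 0 by positivity)).mp hg
  refine ⟨hsum, ?_, ?_⟩
  · -- Cesàro part
    have hA : Tendsto (fun K => ∑ k ∈ Finset.range K, α k) atTop atTop :=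
      (not_summable_iff_tendsto_nat_atTop_of_nonneg (fun k => (hα_pos k).le)).mp hα_div
    have hAinv : Tendsto (fun K => (∑ k ∈ Finset.range K, α k)⁻¹) atTop (nhds 0) :=
      hA.inv_tendsto_atTop
    have hS : Tendsto (fun K => ∑ k ∈ Finset.range K, α k * b k) atTop
        (nhds (∑' k, α k * b k)) := hsum.hasSum.tendsto_sum_nat
    simpa using hAinv.mul hS
  · -- liminf part
    have hfreq : ∀ ε : ℝ, 0 < ε → ∃ᶠ k in atTop, b k ≤ ε := by
      intro ε hε
      by_contra h
      rw [not_frequently] at h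
      have h' : ∀ᶠ k in atTop, ε < b k := by
        filter_upwards [h] with k hk; exact lt_of_not_ge hk
      obtain ⟨M, hM⟩ := eventually_atTop.mp h'
      have htail : Summable (fun k => α (k + M) * b (k + M)) :=
        (summable_nat_add_iff M).mpr hsum
      have hcomp : Summable (fun k => ε * α (k + M)) := by
        apply Summable.of_nonneg_of_le
          (fun k => by have := (hα_pos (k + M)).le; positivity)
          (fun k => ?_) htail
        have h1 : ε < b (k + M) := hM (k + M) (Nat.le_add_left M k)
        have h2 := (hα_pos (k + M)).le
        nlinarith
      have : Summable (fun k => α (k + M)) :=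
        (summable_mul_left_iff hε.ne').mp hcomp
      exact hα_div ((summable_nat_add_iff M).mp this)
    have hcobdd : IsCoboundedUnder (· ≥ ·) atTop b :=
      Filter.IsCoboundedUnder.of_frequently_le (hfreq 1 one_pos)
    have hbddb : IsBoundedUnder (· ≥ ·) atTop b :=
      Filter.isBoundedUnder_of ⟨0, hb⟩
    have hle : liminf b atTop ≤ 0 := by
      refine le_of_forall_pos_le_add fun ε hε => ?_
      have := liminf_le_of_frequently_le (hfreq ε hε) hbddb
      linarith
    have hge : 0 ≤ liminf b atTop :=
      le_liminf_of_le hcobdd (Eventually.of_forall hb)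
    linarith
end
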